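/- arXiv:1808.01432 — 3 statements merged into one kernel-verified Lean document; each statement's English description precedes it below -/
import Mathlib

section
/- The generating function for partitions into at most n parts where no odd part repeats is (-q; q²)_n / (q²; q²)_n; that is, the coefficient of q^N in (-q;q²)_n/(q²;q²)_n equals the number of partitions of N into at most n parts in which every odd part occurs at most once. -/
open Finset PowerSeries

/-- `l` is a partition of `n`: a nondecreasing list of positive integers summing to `n`. -/
def IsPartitionOf (n : ℕ) (l : List ℕ) : Prop :=
  l.Pairwise (· ≤ ·) ∧ (∀ x ∈ l, 0 < x) ∧ l.sum = n

/-- `l` has difference at least `k` at distance `d`. -/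
def DiffCond (k d : ℕ) (l : List ℕ) : Prop :=
  ∀ (j : ℕ) (h : j + d < l.length), l[j]'(by omega) + k ≤ l[j + d]'h

/-- If two successive parts differ by at most one, then their sum is ≡ `r` (mod 3). -/
def SumCond2 (r : ℕ) (l : List ℕ) : Prop :=
  ∀ (j : ℕ) (h : j + 1 < l.length),
    l[j + 1]'h ≤ l[j]'(by omega) + 1 → (l[j]'(by omega) + l[j + 1]'h) % 3 = r

/-- If parts at distance two differ by at most one, then their sum, together with the
intermediate part, is ≡ `r` (mod 3). -/
def SumCond3 (r : ℕ) (l : List ℕ) : Prop :=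
  ∀ (j : ℕ) (h : j + 2 < l.length),
    l[j + 2]'h ≤ l[j]'(by omega) + 1 →
      (l[j]'(by omega) + l[j + 1]'(by omega) + l[j + 2]'h) % 3 = r

/-- `(q; q)_n` as a formal power series in `q = X`. -/
noncomputable def qq (n : ℕ) : PowerSeries ℚ :=
  ∏ j ∈ Finset.range n, (1 - (X : PowerSeries ℚ) ^ (j + 1))

/-- `(q^2; q^2)_n`. -/
noncomputable def qsq (n : ℕ) : PowerSeries ℚ :=
  ∏ j ∈ Finset.range n, (1 - (X : PowerSeries ℚ) ^ (2 * (j + 1)))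

/-- `(q^3; q^3)_n`. -/
noncomputable def qcube (n : ℕ) : PowerSeries ℚ :=
  ∏ j ∈ Finset.range n, (1 - (X : PowerSeries ℚ) ^ (3 * (j + 1)))

/-- `(q^4; q^4)_n`. -/
noncomputable def qfour (n : ℕ) : PowerSeries ℚ :=
  ∏ j ∈ Finset.range n, (1 - (X : PowerSeries ℚ) ^ (4 * (j + 1)))

/-- `(-q; q^2)_n`. -/
noncomputable def nqodd (n : ℕ) : PowerSeries ℚ :=
  ∏ j ∈ Finset.range n, (1 + (X : PowerSeries ℚ) ^ (2 * j + 1))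


def S (n N : ℕ) : Set (List ℕ) :=
  {l | l.Pairwise (· ≤ ·) ∧ (∀ x ∈ l, 0 < x) ∧ l.sum = N ∧ l.length ≤ n ∧
    ∀ x : ℕ, x % 2 = 1 → l.count x ≤ 1}

def bmap (n m a : ℕ) (μ : List ℕ) : List ℕ :=
  if m = 0 ∧ a = 0 then μ
  else (2*m+a) :: (List.replicate (n - μ.length) (2*(m+a)) ++ μ.map (· + 2*(m+a)))

lemma sum_map_add (c : ℕ) (l : List ℕ) : (l.map (· + c)).sum = l.sum + l.length * c := by
  induction l with
  | nil => simp
  | cons a tl ih => simp [ih]; ring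

lemma count_map_add' (x c : ℕ) (l : List ℕ) :
    (l.map (· + c)).count x = if c ≤ x then l.count (x - c) else 0 := by
  split
  · rename_i h
    have hx : x = (x - c) + c := by omega
    rw [hx]
    have := List.count_map_of_injective l (· + c) (fun u v huv => by simpa using huv) (x - c)
    simpa using this
  · rename_i h
    rw [List.count_eq_zero]
    intro hmem
    rw [List.mem_map] at hmem
    obtain ⟨y, _, rfl⟩ := hmem
    omega

lemma bwd (n m a M : ℕ) (ha : a ≤ 1) (μ : List ℕ) (hμ : μ ∈ S n M) :
    bmap n m a μ ∈ S (n+1) (M + ((2*n+2)*m + (2*n+1)*a)) := by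
  obtain ⟨hs, hpos, hsum, hlen, hodd⟩ := hμ
  by_cases h0 : m = 0 ∧ a = 0
  · rw [bmap, if_pos h0, h0.1, h0.2]
    exact ⟨hs, hpos, by simpa using hsum, hlen.trans (n.le_succ), hodd⟩
  · rw [bmap, if_neg h0]
    have hma : 0 < 2*m + a := by rcases Nat.eq_zero_or_pos m with rfl|hm <;> omega
    have hmemtl : ∀ b ∈ List.replicate (n - μ.length) (2*(m+a)) ++ μ.map (· + 2*(m+a)),
        2*(m+a) ≤ b := by
      intro b hb
      rw [List.mem_append] at hb
      rcases hb with hb | hb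
      · rw [List.eq_of_mem_replicate hb]
      · rw [List.mem_map] at hb; obtain ⟨y, _, rfl⟩ := hb; omega
    refine ⟨?_, ?_, ?_, ?_, ?_⟩
    · rw [List.pairwise_cons]
      refine ⟨fun b hb => le_trans (by omega) (hmemtl b hb), ?_⟩
      rw [List.pairwise_append]
      refine ⟨?_, ?_, ?_⟩
      · rw [List.pairwise_replicate]; right; exact le_rfl
      · rw [List.pairwise_map]
        exact hs.imp (fun h => by omega)
      · intro u hu v hv
        rw [List.eq_of_mem_replicate hu]
        rw [List.mem_map] at hv; obtain ⟨y, _, rfl⟩ := hv; omega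
    · intro x hx
      rw [List.mem_cons] at hx
      rcases hx with rfl | hx
      · omega
      · exact lt_of_lt_of_le (by omega) (hmemtl x hx)
    · rw [List.sum_cons, List.sum_append, List.sum_replicate, sum_map_add, hsum,
        smul_eq_mul]
      have h2 : (n - μ.length) + μ.length = n := by omega
      calc 2*m+a + ((n - μ.length) * (2*(m+a)) + (M + μ.length * (2*(m+a))))
          = M + ((n - μ.length) + μ.length) * (2*(m+a)) + (2*m+a) := by ring
        _ = M + n * (2*(m+a)) + (2*m+a) := by rw [h2]
        _ = M + ((2*n+2)*m + (2*n+1)*a) := by ring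
    · simp only [List.length_cons, List.length_append, List.length_replicate,
        List.length_map]
      omega
    · intro x hx
      simp only [List.count_cons, List.count_append, List.count_replicate,
        count_map_add', beq_iff_eq]
      rw [if_neg (show ¬ (2*(m+a) = x) by omega)]
      by_cases hxt : x = 2*m + a
      · have ha1 : a = 1 := by omega
        rw [if_neg (show ¬ (2*(m+a) ≤ x) by omega), if_pos hxt.symm]
      · rw [if_neg (show ¬ (2*m+a = x) from fun h => hxt h.symm)]
        split
        · rename_i hc
          have h2 := hodd (x - 2*(m+a)) (by omega)
          omega
        · omega

lemma drop_gt (c : ℕ) (l : List ℕ) (hs : l.Pairwise (· ≤ ·)) (hge : ∀ x ∈ l, c ≤ x) :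
    ∀ x ∈ l.dropWhile (fun y => y == c), c < x := by
  induction l with
  | nil => intro x hx; simp at hx
  | cons b tl ih =>
    intro x hx
    rw [List.dropWhile_cons] at hx
    split at hx
    · exact ih hs.of_cons (fun y hy => hge y (List.mem_cons_of_mem _ hy)) x hx
    · rename_i hb
      rw [List.mem_cons] at hx
      have hbc : b ≠ c := by simpa using hb
      have hcb : c ≤ b := hge b List.mem_cons_self
      rcases hx with rfl | hx
      · omega
      · exact lt_of_lt_of_le (by omega) (List.rel_of_pairwise_cons hs hx)

lemma fwd (n N : ℕ) (l : List ℕ) (hl : l ∈ S (n+1) N) :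
    ∃ m a μ, a ≤ 1 ∧ (2*n+2)*m + (2*n+1)*a ≤ N ∧
      μ ∈ S n (N - ((2*n+2)*m + (2*n+1)*a)) ∧ bmap n m a μ = l := by
  obtain ⟨hs, hpos, hsum, hlen, hodd⟩ := hl
  by_cases hlen' : l.length ≤ n
  · exact ⟨0, 0, l, by omega, by omega,
      by simpa [S] using (⟨hs, hpos, by simpa using hsum, hlen', hodd⟩ :
        l ∈ S n (N - ((2*n+2)*0 + (2*n+1)*0))),
      by rw [bmap, if_pos ⟨rfl, rfl⟩]⟩
  · cases l with
    | nil => simp at hlen'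
    | cons t tl =>
      simp only [List.length_cons] at hlen hlen'
      have hlen2 : tl.length = n := by omega
      have ht : 0 < t := hpos t List.mem_cons_self
      set a := t % 2 with hadef
      set m := t / 2 with hmdef
      have ha : a ≤ 1 := by omega
      have hta : t = 2*m + a := by omega
      set c := 2*(m+a) with hcdef
      have htlge : ∀ x ∈ tl, c ≤ x := by
        intro x hx
        have hxt : t ≤ x := List.rel_of_pairwise_cons hs hx
        rcases Nat.eq_zero_or_pos a with ha0 | ha1
        · omega
        · have ha1 : a = 1 := by omega
          have hodd_t := hodd t (by omega)
          have hcount : tl.count t = 0 := by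
            have h5 := hodd t (by omega)
            rw [List.count_cons_self] at h5
            omega
          have hxne : x ≠ t := fun h => by
            have h6 : 0 < tl.count t := List.count_pos_iff.mpr (h ▸ hx)
            omega
          omega
      set rep := tl.takeWhile (fun y => y == c) with hrepdef
      set rest := tl.dropWhile (fun y => y == c) with hrestdef
      have hsplit : rep ++ rest = tl := List.takeWhile_append_dropWhile
      have hrep : rep = List.replicate rep.length c :=
        List.eq_replicate_length.mpr (fun b hb => by
          have := List.mem_takeWhile_imp hb; simpa using this)
      have htl_sorted : tl.Pairwise (· ≤ ·) := hs.of_cons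
      have hrest_gt : ∀ x ∈ rest, c < x := drop_gt c tl htl_sorted htlge
      have hrest_sorted : rest.Pairwise (· ≤ ·) :=
        htl_sorted.sublist (List.dropWhile_sublist _)
      set μ := rest.map (· - c) with hμdef
      have hμmap : μ.map (· + c) = rest := by
        rw [hμdef, List.map_map]
        have : ∀ x ∈ rest, ((fun y => y + c) ∘ fun y => y - c) x = id x := by
          intro x hx
          have := hrest_gt x hx
          simp only [Function.comp_apply, id_eq]
          omega
        rw [List.map_congr_left this, List.map_id]
      have hμlen : μ.length = rest.length := List.length_map _
      have hlensplit : rep.length + rest.length = n := by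
        rw [← hlen2, ← hsplit, List.length_append]
      have hμlen_le : μ.length ≤ n := by omega
      have hreplen : rep.length = n - μ.length := by omega
      have hrest_sum : rest.sum = μ.sum + μ.length * c := by
        rw [← hμmap, sum_map_add, List.length_map]
      have hsum2 : t + (rep.length * c + rest.sum) = N := by
        rw [← hsum, List.sum_cons, ← hsplit, List.sum_append]
        congr 1
        rw [hrep, List.sum_replicate, smul_eq_mul, List.length_replicate]
      have hj : t + n * c = (2*n+2)*m + (2*n+1)*a := by
        rw [hta, hcdef]; ring
      have hjN : (2*n+2)*m + (2*n+1)*a ≤ N := by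
        rw [← hj, ← hsum2, hrest_sum]
        have : rep.length * c + (μ.sum + μ.length * c) ≥ (rep.length + μ.length) * c := by
          ring_nf; omega
        have h2 : rep.length + μ.length = n := by omega
        nlinarith [h2]
      refine ⟨m, a, μ, ha, hjN, ⟨?_, ?_, ?_, hμlen_le, ?_⟩, ?_⟩
      · rw [hμdef, List.pairwise_map]
        exact hrest_sorted.imp (fun h => by omega)
      · intro x hx
        rw [hμdef, List.mem_map] at hx
        obtain ⟨y, hy, rfl⟩ := hx
        have := hrest_gt y hy
        omega
      · have : μ.sum = N - (t + n * c) := by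
          have hnc : rep.length * c + μ.length * c = n * c := by
            rw [← add_mul]
            congr 1
            omega
          omega
        rw [this, hj]
      · intro x hx
        have h1 : μ.count x = rest.count (x + c) := by
          rw [← hμmap]
          exact (List.count_map_of_injective μ (· + c)
            (fun u v huv => by simpa using huv) x).symm
        have h2 : rest.count (x + c) ≤ (t :: tl).count (x + c) := by
          have hsub : List.Sublist rest (t :: tl) :=
            (List.dropWhile_sublist _).trans (List.sublist_cons_self _ _)
          exact hsub.count_le _
        have h3 := hodd (x + c) (by omega)
        omega
      · rw [bmap, if_neg (by omega)]
        rw [hμmap, ← hreplen, ← hrep, hsplit, ← hta]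

lemma bmap_length (n m a : ℕ) (μ : List ℕ) (h : ¬(m = 0 ∧ a = 0)) (hlen : μ.length ≤ n) :
    (bmap n m a μ).length = n + 1 := by
  rw [bmap, if_neg h]
  simp only [List.length_cons, List.length_append, List.length_replicate, List.length_map]
  omega

lemma bmap_inj (n m a : ℕ) (μ₁ μ₂ : List ℕ) (h1 : μ₁.length ≤ n) (h2 : μ₂.length ≤ n)
    (hp1 : ∀ x ∈ μ₁, 0 < x) (hp2 : ∀ x ∈ μ₂, 0 < x)
    (heq : bmap n m a μ₁ = bmap n m a μ₂) : μ₁ = μ₂ := by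
  by_cases h0 : m = 0 ∧ a = 0
  · rwa [bmap, if_pos h0, bmap, if_pos h0] at heq
  · rw [bmap, if_neg h0, bmap, if_neg h0, List.cons.injEq] at heq
    obtain ⟨-, heq⟩ := heq
    set c := 2*(m+a) with hc
    have hcount : ∀ μ : List ℕ, (∀ x ∈ μ, 0 < x) → (μ.map (· + c)).count c = 0 := by
      intro μ hp
      rw [List.count_eq_zero]
      intro hmem
      rw [List.mem_map] at hmem
      obtain ⟨y, hy, hyc⟩ := hmem
      have := hp y hy
      omega
    have hcnt := congrArg (List.count c) heq
    rw [List.count_append, List.count_append, List.count_replicate_self,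
      List.count_replicate_self, hcount μ₁ hp1, hcount μ₂ hp2] at hcnt
    have hlen12 : μ₁.length = μ₂.length := by omega
    rw [hlen12] at heq
    have heq2 := List.append_cancel_left heq
    exact List.map_injective_iff.mpr (fun u v huv => by omega) heq2

lemma bmap_ne (n m a m' a' : ℕ) (ha : a ≤ 1) (ha' : a' ≤ 1) (hne : ¬(m = m' ∧ a = a'))
    (μ μ' : List ℕ) (h1 : μ.length ≤ n) (h2 : μ'.length ≤ n) :
    bmap n m a μ ≠ bmap n m' a' μ' := by
  intro heq
  by_cases h0 : m = 0 ∧ a = 0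
  · by_cases h0' : m' = 0 ∧ a' = 0
    · exact hne ⟨by omega, by omega⟩
    · have hL : (bmap n m a μ).length ≤ n := by rw [bmap, if_pos h0]; exact h1
      rw [heq, bmap_length n m' a' μ' h0' h2] at hL
      omega
  · by_cases h0' : m' = 0 ∧ a' = 0
    · have hL : (bmap n m' a' μ').length ≤ n := by rw [bmap, if_pos h0']; exact h2
      rw [← heq, bmap_length n m a μ h0 h1] at hL
      omega
    · rw [bmap, if_neg h0, bmap, if_neg h0', List.cons.injEq] at heq
      have := heq.1
      exact hne ⟨by omega, by omega⟩



def A : ℕ → ℕ → ℕ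
  | 0, N => if N = 0 then 1 else 0
  | n+1, N => ∑ j ∈ Finset.range (N+1),
      if j % (2*n+2) = 0 ∨ j % (2*n+2) = 2*n+1 then A n (N - j) else 0

noncomputable def geo (k : ℕ) : PowerSeries ℚ :=
  PowerSeries.mk fun m => if k ∣ m then 1 else 0

lemma geo_spec {k : ℕ} (hk : 0 < k) : (1 - (X : PowerSeries ℚ)^k) * geo k = 1 := by
  ext N
  simp only [sub_mul, one_mul, map_sub, coeff_one, coeff_X_pow_mul', geo, coeff_mk]
  rcases Nat.lt_or_ge N k with h | h
  · rw [if_neg (by omega : ¬ k ≤ N), sub_zero]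
    rcases Nat.eq_zero_or_pos N with rfl | hN
    · simp
    · rw [if_neg (fun hd => by have := Nat.le_of_dvd hN hd; omega), if_neg (by omega)]
  · have hiff : k ∣ N ↔ k ∣ N - k := by
      constructor
      · intro hd; exact Nat.dvd_sub hd dvd_rfl
      · intro hd; have h2 := Nat.sub_add_cancel h; rw [← h2]; exact hd.add dvd_rfl
    rw [if_pos h, if_neg (by omega : ¬ N = 0)]
    by_cases hd : k ∣ N
    · rw [if_pos hd, if_pos (hiff.mp hd), sub_self]
    · rw [if_neg hd, if_neg (fun h2 => hd (hiff.mpr h2)), sub_self]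

lemma qsq_inv (n : ℕ) : (qsq n)⁻¹ = ∏ j ∈ Finset.range n, geo (2*(j+1)) := by
  rw [PowerSeries.inv_eq_iff_mul_eq_one]
  · rw [mul_comm, qsq, ← Finset.prod_mul_distrib]
    calc ∏ j ∈ Finset.range n, ((1 - (X:PowerSeries ℚ)^(2*(j+1))) * geo (2*(j+1)))
        = ∏ _j ∈ Finset.range n, (1 : PowerSeries ℚ) :=
          Finset.prod_congr rfl (fun j _ => geo_spec (by omega))
      _ = 1 := Finset.prod_const_one
  · rw [qsq, map_prod]
    rw [Finset.prod_congr rfl (fun j (_ : j ∈ Finset.range n) => by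
      rw [map_sub, map_one, map_pow, constantCoeff_X, zero_pow (by omega : 2*(j+1) ≠ 0), sub_zero])]
    simp

lemma coeff_h (n j : ℕ) :
    PowerSeries.coeff j ((1 + (X : PowerSeries ℚ)^(2*n+1)) * geo (2*n+2)) =
      if j % (2*n+2) = 0 ∨ j % (2*n+2) = 2*n+1 then 1 else 0 := by
  rw [add_mul, one_mul, map_add]
  simp only [coeff_X_pow_mul', geo, coeff_mk]
  rcases Nat.lt_or_ge j (2*n+1) with h | h
  · rw [if_neg (by omega : ¬ 2*n+1 ≤ j), add_zero]
    have hj : j % (2*n+2) = j := Nat.mod_eq_of_lt (by omega)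
    rcases Nat.eq_zero_or_pos j with rfl | hj0
    · simp
    · rw [if_neg (fun hd => by have := Nat.le_of_dvd hj0 hd; omega), if_neg (by omega)]
  · rw [if_pos h]
    have key : 2*n+2 ∣ j - (2*n+1) ↔ j % (2*n+2) = 2*n+1 := by
      constructor
      · rintro ⟨c, hc⟩
        have h2 : j = (2*n+1) + (2*n+2)*c := by omega
        rw [h2, Nat.add_mul_mod_self_left]
        exact Nat.mod_eq_of_lt (by omega)
      · intro hr
        refine ⟨j / (2*n+2), ?_⟩
        have := Nat.div_add_mod j (2*n+2)
        omega
    have hmod : 2*n+2 ∣ j ↔ j % (2*n+2) = 0 := Nat.dvd_iff_mod_eq_zero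
    by_cases h1 : 2*n+2 ∣ j
    · have h2 : ¬ (2*n+2 ∣ j - (2*n+1)) := by
        rw [key]; rw [hmod] at h1; omega
      rw [if_pos h1, if_neg h2, if_pos (Or.inl (hmod.mp h1)), add_zero]
    · by_cases h2 : 2*n+2 ∣ j - (2*n+1)
      · rw [if_neg h1, if_pos h2, if_pos (Or.inr (key.mp h2)), zero_add]
      · rw [if_neg h1, if_neg h2, if_neg ?_, add_zero]
        rintro (h3 | h3)
        · exact h1 (hmod.mpr h3)
        · exact h2 (key.mpr h3)

lemma L1 (n N : ℕ) : PowerSeries.coeff N (nqodd n * (qsq n)⁻¹) = (A n N : ℚ) := by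
  induction n generalizing N with
  | zero =>
    rw [nqodd, qsq, Finset.prod_range_zero, Finset.prod_range_zero, inv_one, mul_one,
      coeff_one, A]
    split <;> simp
  | succ n ih =>
    have hF : nqodd (n+1) * (qsq (n+1))⁻¹ =
        (nqodd n * (qsq n)⁻¹) * ((1 + (X : PowerSeries ℚ)^(2*n+1)) * geo (2*n+2)) := by
      rw [qsq_inv, qsq_inv, nqodd, nqodd, Finset.prod_range_succ, Finset.prod_range_succ,
        show 2*(n+1) = 2*n+2 from by ring]
      ring
    rw [hF, PowerSeries.coeff_mul, Finset.Nat.sum_antidiagonal_eq_sum_range_succ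
      (fun a b => (PowerSeries.coeff a (nqodd n * (qsq n)⁻¹)) *
        (PowerSeries.coeff b ((1 + (X : PowerSeries ℚ)^(2*n+1)) * geo (2*n+2))))]
    rw [← Finset.sum_range_reflect]
    have hA : (A (n+1) N : ℚ) = ∑ j ∈ Finset.range (N+1),
        if j % (2*n+2) = 0 ∨ j % (2*n+2) = 2*n+1 then (A n (N - j) : ℚ) else 0 := by
      rw [A]; push_cast; exact Finset.sum_congr rfl (fun j _ => by split <;> simp)
    rw [hA]
    refine Finset.sum_congr rfl (fun j hj => ?_)
    rw [Finset.mem_range] at hj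
    have h1 : N + 1 - 1 - j = N - j := by omega
    rw [h1, ih, coeff_h, show N - (N - j) = j by omega]
    split <;> simp

lemma L2 (n : ℕ) : ∀ N, (S n N).Finite ∧ (S n N).ncard = A n N := by
  induction n with
  | zero =>
    intro N
    by_cases hN : N = 0
    · subst hN
      have hset : S 0 0 = {([] : List ℕ)} := by
        ext l
        constructor
        · rintro ⟨-, -, hsum, hlen, -⟩
          simpa using List.length_eq_zero_iff.mp (by omega)
        · rintro rfl
          exact ⟨by simp, by simp, rfl, by simp, by simp⟩
      rw [hset]
      exact ⟨Set.finite_singleton _, by simp [A]⟩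
    · have hset : S 0 N = ∅ := by
        ext l
        simp only [Set.mem_empty_iff_false, iff_false]
        rintro ⟨-, -, hsum, hlen, -⟩
        have h2 : l = [] := List.length_eq_zero_iff.mp (by omega)
        subst h2
        simp only [List.sum_nil] at hsum
        exact hN hsum.symm
      rw [hset]
      exact ⟨Set.finite_empty, by simp [A, hN]⟩
  | succ n ih =>
    intro N
    classical
    set G : ℕ → Finset (List ℕ) := fun j =>
      if j % (2*n+2) = 0 ∨ j % (2*n+2) = 2*n+1 then
        ((ih (N - j)).1.toFinset).image
          (bmap n (j/(2*n+2)) (if j % (2*n+2) = 2*n+1 then 1 else 0))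
      else ∅ with hG
    set T : Finset (List ℕ) := (Finset.range (N+1)).biUnion G with hT
    have hGmem : ∀ j x, x ∈ G j ↔ (j % (2*n+2) = 0 ∨ j % (2*n+2) = 2*n+1) ∧
        ∃ μ ∈ S n (N - j), bmap n (j/(2*n+2)) (if j % (2*n+2) = 2*n+1 then 1 else 0) μ = x := by
      intro j x
      by_cases hvalid : j % (2*n+2) = 0 ∨ j % (2*n+2) = 2*n+1
      · rw [hG]
        simp only [if_pos hvalid, Finset.mem_image, Set.Finite.mem_toFinset]
        constructor
        · rintro ⟨μ, hμ, hbm⟩; exact ⟨hvalid, μ, hμ, hbm⟩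
        · rintro ⟨-, μ, hμ, hbm⟩; exact ⟨μ, hμ, hbm⟩
      · rw [hG]
        simp only [if_neg hvalid, Finset.notMem_empty, false_iff]
        rintro ⟨hv, -⟩; exact hvalid hv
    have hrecon : ∀ j, (j % (2*n+2) = 0 ∨ j % (2*n+2) = 2*n+1) →
        (2*n+2)*(j/(2*n+2)) + (2*n+1)*(if j % (2*n+2) = 2*n+1 then 1 else 0) = j := by
      intro j hv
      have hdm := Nat.div_add_mod j (2*n+2)
      rcases hv with h | h
      · rw [if_neg (by omega), mul_zero, add_zero]
        rw [h, add_zero] at hdm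
        exact hdm
      · rw [if_pos h, mul_one, ← h]
        exact hdm
    have hset : S (n+1) N = ↑T := by
      ext l
      constructor
      · intro hl
        obtain ⟨m, a, μ, ha, hjN, hμ, hbm⟩ := fwd n N l hl
        rw [Finset.mem_coe, hT, Finset.mem_biUnion]
        interval_cases a
        · refine ⟨(2*n+2)*m, Finset.mem_range.mpr (by omega), ?_⟩
          have hmod : ((2*n+2)*m) % (2*n+2) = 0 := Nat.mul_mod_right _ _
          have hdiv : ((2*n+2)*m) / (2*n+2) = m := Nat.mul_div_cancel_left m (by omega)
          rw [hGmem]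
          refine ⟨Or.inl hmod, μ, ?_, ?_⟩
          · have : (2*n+2)*m + (2*n+1)*0 = (2*n+2)*m := by ring
            rwa [this] at hμ
          · rw [hdiv, if_neg (by omega)]
            exact hbm
        · refine ⟨(2*n+2)*m + (2*n+1), Finset.mem_range.mpr (by omega), ?_⟩
          have hmod : ((2*n+2)*m + (2*n+1)) % (2*n+2) = 2*n+1 := by
            rw [Nat.mul_add_mod]
            exact Nat.mod_eq_of_lt (by omega)
          have hdiv : ((2*n+2)*m + (2*n+1)) / (2*n+2) = m := by
            rw [Nat.mul_add_div (by omega), Nat.div_eq_of_lt (by omega), add_zero]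
          rw [hGmem]
          refine ⟨Or.inr hmod, μ, ?_, ?_⟩
          · have : (2*n+2)*m + (2*n+1)*1 = (2*n+2)*m + (2*n+1) := by ring
            rwa [this] at hμ
          · rw [hdiv, if_pos hmod]
            exact hbm
      · intro hl
        rw [Finset.mem_coe, hT, Finset.mem_biUnion] at hl
        obtain ⟨j, hjr, hjG⟩ := hl
        rw [hGmem] at hjG
        obtain ⟨hvalid, μ, hμ, hbm⟩ := hjG
        rw [Finset.mem_range] at hjr
        have ha : (if j % (2*n+2) = 2*n+1 then 1 else 0) ≤ 1 := by split <;> omega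
        have hbwd := bwd n (j/(2*n+2)) _ (N - j) ha μ hμ
        rw [hbm, hrecon j hvalid] at hbwd
        have hNj : N - j + j = N := by omega
        rwa [hNj] at hbwd
    have hdisj : ∀ j ∈ Finset.range (N+1), ∀ j' ∈ Finset.range (N+1), j ≠ j' →
        Disjoint (G j) (G j') := by
      intro j _ j' _ hne
      rw [Finset.disjoint_left]
      intro x hx hx'
      rw [hGmem] at hx hx'
      obtain ⟨hv, μ, hμ, hb⟩ := hx
      obtain ⟨hv', μ', hμ', hb'⟩ := hx'
      have ha : (if j % (2*n+2) = 2*n+1 then 1 else 0) ≤ 1 := by split <;> omega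
      have ha' : (if j' % (2*n+2) = 2*n+1 then 1 else 0) ≤ 1 := by split <;> omega
      have hnepair : ¬(j/(2*n+2) = j'/(2*n+2) ∧
          (if j % (2*n+2) = 2*n+1 then 1 else 0) =
            (if j' % (2*n+2) = 2*n+1 then 1 else 0)) := by
        rintro ⟨he1, he2⟩
        apply hne
        rw [← hrecon j hv, ← hrecon j' hv', he1, he2]
      obtain ⟨-, hp1, -, hl1, -⟩ := hμ
      obtain ⟨-, hp2, -, hl2, -⟩ := hμ'
      exact bmap_ne n (j/(2*n+2)) _ (j'/(2*n+2)) _ ha ha' hnepair μ μ'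
        hl1 hl2 (hb.trans hb'.symm)
    have hcard : T.card = A (n+1) N := by
      rw [hT, Finset.card_biUnion hdisj, A]
      refine Finset.sum_congr rfl (fun j _ => ?_)
      by_cases hvalid : j % (2*n+2) = 0 ∨ j % (2*n+2) = 2*n+1
      · rw [hG]
        simp only [if_pos hvalid]
        have hinj : Set.InjOn
            (bmap n (j/(2*n+2)) (if j % (2*n+2) = 2*n+1 then 1 else 0))
            (((ih (N - j)).1.toFinset : Finset (List ℕ)) : Set (List ℕ)) := by
          intro μ₁ hμ₁ μ₂ hμ₂ heq
          rw [Finset.mem_coe, Set.Finite.mem_toFinset] at hμ₁ hμ₂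
          obtain ⟨-, hq1, -, hk1, -⟩ := hμ₁
          obtain ⟨-, hq2, -, hk2, -⟩ := hμ₂
          exact bmap_inj n _ _ μ₁ μ₂ hk1 hk2 hq1 hq2 heq
        rw [Finset.card_image_of_injOn hinj,
          ← Set.ncard_eq_toFinset_card _ (ih (N - j)).1, (ih (N - j)).2]
      · rw [hG]
        simp only [if_neg hvalid]
        rw [Finset.card_empty]
    constructor
    · rw [hset]; exact T.finite_toSet
    · rw [hset, Set.ncard_coe_finset, hcard]

/-- The coefficient of `q^N` in `(-q; q²)_n / (q²; q²)_n` equals the number of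
partitions of `N` into at most `n` parts in which no odd part repeats. -/
theorem distinct_odds_gf (n N : ℕ) :
    PowerSeries.coeff N (nqodd n * (qsq n)⁻¹) =
      (Set.ncard {l : List ℕ | l.Pairwise (· ≤ ·) ∧ (∀ x ∈ l, 0 < x) ∧ l.sum = N ∧
        l.length ≤ n ∧ ∀ x : ℕ, x % 2 = 1 → l.count x ≤ 1} : ℚ) := by
  rw [L1]
  norm_cast
  have hSeq : {l : List ℕ | l.Pairwise (· ≤ ·) ∧ (∀ x ∈ l, 0 < x) ∧ l.sum = N ∧
      l.length ≤ n ∧ ∀ x : ℕ, x % 2 = 1 → l.count x ≤ 1} = S n N := rfl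
  rw [hSeq, (L2 n N).2]
end

section
/- Let kr_4(n,m) be the number of partitions of n into m parts with smallest part at least two, difference at least three at distance two, such that if two successive parts differ by at most one then their sum is ≡ 2 (mod 3). Then ∑_{n,m≥0} kr_4(n,m) q^n x^m = ∑_{n_1,n_2≥0} q^{3n_2² + 2n_2 + n_1² + n_1 + 3n_1 n_2} x^{2n_2 + n_1} / ((q;q)_{n_1} (q³;q³)_{n_2}). -/
open Finset PowerSeries

/-- `kr₄ n m`: partitions of `n` into `m` parts, smallest part at least two, difference
at least three at distance two, close successive sums ≡ 2 (mod 3). -/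
noncomputable def kr4 (n m : ℕ) : ℕ :=
  Set.ncard {l : List ℕ |
    IsPartitionOf n l ∧ l.length = m ∧ (∀ x ∈ l, 2 ≤ x) ∧ DiffCond 3 2 l ∧ SumCond2 2 l}
namespace KR4

def base (a b : ℕ) : ℕ := 3 * b ^ 2 + 2 * b + a ^ 2 + a + 3 * a * b

def bparts (s : ℕ) : List ℕ := [s / 2, s - s / 2]

def F : List ℕ → List ℕ → List ℕ
  | [], [] => []
  | m :: ms, [] => (m + 2) :: F (ms.map (· + 2)) []
  | [], v :: vs => bparts (3 * v + 5) ++ F [] (vs.map (· + 2))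
  | m :: ms, v :: vs =>
      if 2 * m + 1 ≤ 3 * v then
        (m + 2) :: F (ms.map (· + 2)) ((v :: vs).map (· + 1))
      else
        bparts (3 * v + 5) ++ F ((m :: ms).map (· + 3)) (vs.map (· + 2))
  termination_by ms vs => ms.length + vs.length
  decreasing_by all_goals simp [List.length_map] <;> omega

theorem F_induct' (motive : List ℕ → List ℕ → Prop) (case1 : motive [] [])
    (case2 : ∀ m ms, motive (ms.map (· + 2)) [] → motive (m :: ms) [])
    (case3 : ∀ v vs, motive [] (vs.map (· + 2)) → motive [] (v :: vs))
    (case4 : ∀ m ms v vs, 2 * m + 1 ≤ 3 * v →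
      motive (ms.map (· + 2)) ((v :: vs).map (· + 1)) → motive (m :: ms) (v :: vs))
    (case5 : ∀ m ms v vs, ¬ 2 * m + 1 ≤ 3 * v →
      motive ((m :: ms).map (· + 3)) (vs.map (· + 2)) → motive (m :: ms) (v :: vs)) :
    ∀ ms vs, motive ms vs := by
  intro ms vs
  induction hn : ms.length + vs.length using Nat.strong_induction_on generalizing ms vs with
  | _ n ih =>
    match ms, vs with
    | [], [] => exact case1
    | m :: ms, [] => exact case2 m ms (ih _ (by simp at hn ⊢; omega) _ _ rfl)
    | [], v :: vs => exact case3 v vs (ih _ (by simp at hn ⊢; omega) _ _ rfl)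
    | m :: ms, v :: vs =>
      by_cases h : 2 * m + 1 ≤ 3 * v
      · exact case4 m ms v vs h (ih _ (by simp at hn ⊢; omega) _ _ rfl)
      · exact case5 m ms v vs h (ih _ (by simp at hn ⊢; omega) _ _ rfl)

def Cond (l : List ℕ) : Prop :=
  l.Pairwise (· ≤ ·) ∧ (∀ x ∈ l, 2 ≤ x) ∧ DiffCond 3 2 l ∧ SumCond2 2 l

lemma diffCond_cons {x : ℕ} {l : List ℕ} :
    DiffCond 3 2 (x :: l) ↔ (∀ z ∈ l.tail.head?, x + 3 ≤ z) ∧ DiffCond 3 2 l := by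
  constructor
  · intro h
    refine ⟨?_, fun j hj => ?_⟩
    · intro z hz
      match l, hz with
      | a :: b :: t, hz =>
        obtain rfl : b = z := by simpa using hz
        simpa using h 0 (by simp)
    · have hlen : j + 1 + 2 < (x :: l).length := by simp; omega
      have := h (j + 1) hlen
      simpa using this
  · rintro ⟨h1, h2⟩ j hj
    match j with
    | 0 =>
      match l, hj with
      | a :: b :: t, _ =>
        simpa using h1 b (by simp)
    | j + 1 =>
      have hlen : j + 2 < l.length := by simp at hj; omega
      have := h2 j hlen
      simpa using this

lemma sumCond2_cons {x : ℕ} {l : List ℕ} :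
    SumCond2 2 (x :: l) ↔
      (∀ y ∈ l.head?, y ≤ x + 1 → (x + y) % 3 = 2) ∧ SumCond2 2 l := by
  constructor
  · intro h
    refine ⟨?_, fun j hj => ?_⟩
    · intro y hy
      match l, hy with
      | a :: t, hy =>
        obtain rfl : a = y := by simpa using hy
        simpa using h 0 (by simp)
    · have hlen : j + 1 + 1 < (x :: l).length := by simp; omega
      have := h (j + 1) hlen
      simpa using this
  · rintro ⟨h1, h2⟩ j hj
    match j with
    | 0 =>
      match l, hj with
      | a :: t, _ => simpa using h1 a (by simp)
    | j + 1 =>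
      have hlen : j + 1 < l.length := by simp at hj; omega
      have := h2 j hlen
      simpa using this

lemma cond_nil : Cond [] := by
  refine ⟨by simp, by simp, fun j hj => by simp at hj, fun j hj => by simp at hj⟩

lemma cond_cons {x : ℕ} {l : List ℕ} :
    Cond (x :: l) ↔
      2 ≤ x ∧ (∀ y ∈ l.head?, x ≤ y ∧ (y ≤ x + 1 → (x + y) % 3 = 2)) ∧
        (∀ z ∈ l.tail.head?, x + 3 ≤ z) ∧ Cond l := by
  unfold Cond
  rw [List.pairwise_cons, diffCond_cons, sumCond2_cons]
  constructor
  · rintro ⟨⟨hs1, hs2⟩, h2, ⟨hd1, hd2⟩, hc1, hc2⟩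
    exact ⟨h2 x (by simp), fun y hy => ⟨hs1 y (List.mem_of_mem_head? hy), hc1 y hy⟩,
      hd1, hs2, fun a ha => h2 a (by simp [ha]), hd2, hc2⟩
  · rintro ⟨hx, hy, hz, hs, h2, hd, hc⟩
    refine ⟨⟨fun b hb => ?_, hs⟩, ?_, ⟨hz, hd⟩, fun y hmem => (hy y hmem).2, hc⟩
    · match l, hb with
      | a :: t, hb =>
        have hxa : x ≤ a := (hy a (by simp)).1
        rcases List.mem_cons.mp hb with h | h
        · omega
        · exact le_trans hxa (List.rel_of_pairwise_cons hs h)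
    · intro a ha
      rcases List.mem_cons.mp ha with h | h
      · omega
      · exact h2 a h

end KR4
namespace KR4

lemma sum_map_add (k : ℕ) (l : List ℕ) : (l.map (· + k)).sum = l.sum + k * l.length := by
  induction l with
  | nil => simp
  | cons a t ih => simp [ih]; ring

lemma sorted_map_add (k : ℕ) (l : List ℕ) :
    (l.map (· + k)).Pairwise (· ≤ ·) ↔ l.Pairwise (· ≤ ·) := by
  simp [List.pairwise_map]

@[simp] lemma bparts_length (s : ℕ) : (bparts s).length = 2 := by simp [bparts]

@[simp] lemma bparts_sum (s : ℕ) : (bparts s).sum = s := by simp [bparts]; omega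

lemma length_F : ∀ ms vs : List ℕ, (F ms vs).length = ms.length + 2 * vs.length := by
  intro ms vs
  induction ms, vs using F_induct' with
  | case1 => simp [F]
  | case2 m ms ih => simp [F, ih]
  | case3 v vs ih => simp [F, ih]; ring
  | case4 m ms v vs h ih =>
      simp only [List.map_cons] at ih
      simp [F, h, ih]; ring
  | case5 m ms v vs h ih =>
      simp only [List.map_cons] at ih
      simp [F, h, ih]; ring

lemma sum_F : ∀ ms vs : List ℕ, (F ms vs).sum = base ms.length vs.length + ms.sum + 3 * vs.sum := by
  intro ms vs
  induction ms, vs using F_induct' with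
  | case1 => simp [F, base]
  | case2 m ms ih => simp [F, ih, sum_map_add, base]; ring
  | case3 v vs ih => simp [F, ih, sum_map_add, base]; ring
  | case4 m ms v vs h ih =>
      simp only [List.map_cons] at ih
      simp [F, h, ih, sum_map_add, base]; ring
  | case5 m ms v vs h ih =>
      simp only [List.map_cons] at ih
      simp [F, h, ih, sum_map_add, base]; ring

def hd1 : List ℕ → List ℕ → ℕ
  | [], [] => 0
  | m :: _, [] => m + 2
  | [], v :: _ => (3 * v + 5) / 2
  | m :: _, v :: _ => if 2 * m + 1 ≤ 3 * v then m + 2 else (3 * v + 5) / 2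

def hd2 : List ℕ → List ℕ → ℕ
  | [], [] => 0
  | _ :: ms, [] => hd1 (ms.map (· + 2)) []
  | [], v :: _ => 3 * v + 5 - (3 * v + 5) / 2
  | m :: ms, v :: vs =>
      if 2 * m + 1 ≤ 3 * v then hd1 (ms.map (· + 2)) ((v :: vs).map (· + 1))
      else 3 * v + 5 - (3 * v + 5) / 2

lemma head?_F : ∀ ms vs : List ℕ, ¬(ms = [] ∧ vs = []) →
    (F ms vs).head? = some (hd1 ms vs) := by
  intro ms vs h
  match ms, vs with
  | [], [] => exact absurd ⟨rfl, rfl⟩ h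
  | m :: ms, [] => simp [F, hd1]
  | [], v :: vs => simp [F, bparts, hd1]
  | m :: ms, v :: vs =>
      by_cases hb : 2 * m + 1 ≤ 3 * v <;> simp [F, bparts, hd1, hb]

end KR4
namespace KR4

lemma mem_some {α} {a y : α} (h : y ∈ some a) : a = y := by simpa using h

lemma main : ∀ ms vs : List ℕ, ms.Pairwise (· ≤ ·) → vs.Pairwise (· ≤ ·) →
    Cond (F ms vs) ∧ (∀ y ∈ (F ms vs).head?, hd1 ms vs ≤ y) ∧
      (∀ z ∈ (F ms vs).tail.head?, hd2 ms vs ≤ z) := by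
  intro ms vs
  induction ms, vs using F_induct' with
  | case1 =>
      intro _ _
      refine ⟨by simpa [F] using cond_nil, ?_, ?_⟩ <;> simp [F]
  | case2 m ms ih =>
      intro hm _
      obtain ⟨hmall, hms⟩ := List.pairwise_cons.mp hm
      obtain ⟨ihC, ihH, ihT⟩ := ih ((sorted_map_add 2 ms).mpr hms) (by simp)
      have hF : F (m :: ms) [] = (m + 2) :: F (ms.map (· + 2)) [] := by simp [F]
      set R := F (ms.map (· + 2)) [] with hR
      have hhead : ∀ y ∈ R.head?, m + 4 ≤ y := by
        intro y hy
        match ms, hy with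
        | [], hy => simp [hR, F] at hy
        | m' :: ms', hy =>
          have := mem_some (by rwa [hR, head?_F _ _ (by simp)] at hy)
          have h1 : m ≤ m' := hmall m' (by simp)
          simp [hd1] at this
          omega
      have htail : ∀ z ∈ R.tail.head?, m + 5 ≤ z := by
        intro z hz
        match ms, hz with
        | [], hz => simp [hR, F] at hz
        | [m'], hz => simp [hR, F] at hz
        | m' :: m'' :: ms'', hz =>
          have hz' := ihT z hz
          have h2 : m ≤ m'' := hmall m'' (by simp)
          simp [hd2, hd1] at hz'
          omega
      refine ⟨?_, ?_, ?_⟩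
      · rw [hF, cond_cons]
        refine ⟨by omega, fun y hy => ?_, fun z hz => ?_, ihC⟩
        · have := hhead y hy; exact ⟨by omega, by omega⟩
        · have := htail z hz; omega
      · rw [hF]; intro y hy
        have := mem_some hy; simp [hd1]; omega
      · rw [hF]; intro z hz
        simpa [hd2] using ihH z hz
  | case3 v vs ih =>
      intro _ hv
      obtain ⟨hvall, hvs⟩ := List.pairwise_cons.mp hv
      obtain ⟨ihC, ihH, ihT⟩ := ih (by simp) ((sorted_map_add 2 vs).mpr hvs)
      have hF : F [] (v :: vs) =
          (3 * v + 5) / 2 :: (3 * v + 5 - (3 * v + 5) / 2) :: F [] (vs.map (· + 2)) := by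
        simp [F, bparts]
      set R := F [] (vs.map (· + 2)) with hR
      have hhead : ∀ y ∈ R.head?,
          (3 * v + 5) / 2 + 3 ≤ y ∧ (3 * v + 5) - (3 * v + 5) / 2 + 2 ≤ y := by
        intro y hy
        match vs, hy with
        | [], hy => simp [hR, F] at hy
        | v' :: vs', hy =>
          have := mem_some (by rwa [hR, head?_F _ _ (by simp)] at hy)
          have h1 : v ≤ v' := hvall v' (by simp)
          simp [hd1] at this
          constructor <;> omega
      have htail : ∀ z ∈ R.tail.head?, (3 * v + 5) - (3 * v + 5) / 2 + 3 ≤ z := by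
        intro z hz
        match vs, hz with
        | [], hz => simp [hR, F] at hz
        | v' :: vs', hz =>
          have hz' := ihT z hz
          have h1 : v ≤ v' := hvall v' (by simp)
          simp [hd2] at hz'
          omega
      refine ⟨?_, ?_, ?_⟩
      · rw [hF, cond_cons]
        refine ⟨by omega, fun y hy => ?_, fun z hz => ?_, ?_⟩
        · have := mem_some hy; constructor <;> omega
        · simp only [List.tail_cons] at hz
          have := hhead z hz; omega
        · rw [cond_cons]
          refine ⟨by omega, fun y hy => ?_, fun z hz => ?_, ihC⟩
          · have := (hhead y hy).2
            exact ⟨by omega, by omega⟩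
          · have := htail z hz; omega
      · rw [hF]; intro y hy
        have := mem_some hy; simp [hd1]; omega
      · rw [hF]; intro z hz
        have := mem_some hz; simp [hd2]; omega
  | case4 m ms v vs h ih =>
      intro hm hv
      obtain ⟨hmall, hms⟩ := List.pairwise_cons.mp hm
      obtain ⟨hvall, hvs⟩ := List.pairwise_cons.mp hv
      obtain ⟨ihC, ihH, ihT⟩ := ih ((sorted_map_add 2 ms).mpr hms)
        ((sorted_map_add 1 (v :: vs)).mpr hv)
      have hF : F (m :: ms) (v :: vs) =
          (m + 2) :: F (ms.map (· + 2)) ((v :: vs).map (· + 1)) := by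
        simp [F, h]
      set R := F (ms.map (· + 2)) ((v :: vs).map (· + 1)) with hR
      have hne : R.head? = some (hd1 (ms.map (· + 2)) ((v :: vs).map (· + 1))) := by
        rw [hR]; exact head?_F _ _ (by simp)
      have hhead : ∀ y ∈ R.head?, m + 4 ≤ y := by
        intro y hy
        have hyv := mem_some (by rwa [hne] at hy)
        match ms with
        | [] => simp [hd1] at hyv; omega
        | m' :: ms' =>
          have h1 : m ≤ m' := hmall m' (by simp)
          simp [hd1] at hyv
          split at hyv <;> omega
      have htail : ∀ z ∈ R.tail.head?, m + 5 ≤ z := by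
        intro z hz
        have hz' := ihT z hz
        match ms with
        | [] => simp [hd2] at hz'; omega
        | m' :: ms' =>
          have h1 : m ≤ m' := hmall m' (by simp)
          simp only [List.map_cons, hd2] at hz'
          split at hz' <;> rename_i hbr
          · match ms' with
            | [] => simp [hd1] at hz'; omega
            | m'' :: ms'' =>
              have h2 : m ≤ m'' := hmall m'' (by simp)
              simp [hd1] at hz'
              split at hz' <;> omega
          · omega
      refine ⟨?_, ?_, ?_⟩
      · rw [hF, cond_cons]
        refine ⟨by omega, fun y hy => ?_, fun z hz => ?_, ihC⟩
        · have := hhead y hy; exact ⟨by omega, by omega⟩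
        · have := htail z hz; omega
      · rw [hF]; intro y hy
        have := mem_some hy; simp [hd1, h]; omega
      · rw [hF]; intro z hz
        have := ihH z hz
        simpa [hd2, h] using this
  | case5 m ms v vs h ih =>
      intro hm hv
      obtain ⟨hmall, hms⟩ := List.pairwise_cons.mp hm
      obtain ⟨hvall, hvs⟩ := List.pairwise_cons.mp hv
      obtain ⟨ihC, ihH, ihT⟩ := ih ((sorted_map_add 3 (m :: ms)).mpr hm)
        ((sorted_map_add 2 vs).mpr hvs)
      have hF : F (m :: ms) (v :: vs) =
          (3 * v + 5) / 2 :: (3 * v + 5 - (3 * v + 5) / 2) ::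
            F ((m :: ms).map (· + 3)) (vs.map (· + 2)) := by
        simp [F, h, bparts]
      set R := F ((m :: ms).map (· + 3)) (vs.map (· + 2)) with hR
      have hne : R.head? = some (hd1 ((m :: ms).map (· + 3)) (vs.map (· + 2))) := by
        rw [hR]; exact head?_F _ _ (by simp)
      have hhead : ∀ y ∈ R.head?,
          (3 * v + 5) / 2 + 3 ≤ y ∧ (3 * v + 5 - (3 * v + 5) / 2) + 2 ≤ y := by
        intro y hy
        have hyv := mem_some (by rwa [hne] at hy)
        match vs with
        | [] => simp [hd1] at hyv; omega
        | v' :: vs' =>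
          have h1 : v ≤ v' := hvall v' (by simp)
          simp [hd1] at hyv
          split at hyv <;> omega
      have htail : ∀ z ∈ R.tail.head?, (3 * v + 5 - (3 * v + 5) / 2) + 3 ≤ z := by
        intro z hz
        have hz' := ihT z hz
        match vs with
        | [] =>
          match ms with
          | [] => simp [hR, F] at hz
          | m' :: ms' =>
            have h1 : m ≤ m' := hmall m' (by simp)
            simp [hd2, hd1] at hz'
            omega
        | v' :: vs' =>
          have h1 : v ≤ v' := hvall v' (by simp)
          simp only [List.map_cons, hd2] at hz'
          split at hz' <;> rename_i hbr
          · match ms with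
            | [] => simp [hd1] at hz'; omega
            | m' :: ms' =>
              have h2 : m ≤ m' := hmall m' (by simp)
              simp [hd1] at hz'
              split at hz' <;> omega
          · omega
      refine ⟨?_, ?_, ?_⟩
      · rw [hF, cond_cons]
        refine ⟨by omega, fun y hy => ?_, fun z hz => ?_, ?_⟩
        · have := mem_some hy; constructor <;> omega
        · simp only [List.tail_cons] at hz
          have := (hhead z hz).1; omega
        · rw [cond_cons]
          refine ⟨by omega, fun y hy => ?_, fun z hz => ?_, ihC⟩
          · have := (hhead y hy).2
            exact ⟨by omega, by omega⟩
          · have := htail z hz; omega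
      · rw [hF]; intro y hy
        have := mem_some hy; simp [hd1, h]; omega
      · rw [hF]; intro z hz
        have := mem_some hz; simp [hd2, h]; omega

end KR4
namespace KR4

def G : List ℕ → List ℕ × List ℕ
  | [] => ([], [])
  | [x] => ([x - 2], [])
  | x :: y :: t =>
      if y ≤ x + 1 then
        ((G t).1.map (· - 3), (x + y - 5) / 3 :: (G t).2.map (· - 2))
      else
        ((x - 2) :: (G (y :: t)).1.map (· - 2), (G (y :: t)).2.map (· - 1))
  termination_by l => l.length
  decreasing_by all_goals simp <;> omega

@[simp] lemma comp_add_sub (k : ℕ) : ((fun x => x - k) ∘ fun x : ℕ => x + k) = id := by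
  funext x; simp

lemma map_add_sub (k : ℕ) (l : List ℕ) : (l.map (· + k)).map (· - k) = l := by
  rw [List.map_map]
  have : ((· - k) ∘ (· + k) : ℕ → ℕ) = id := by funext x; simp
  simp [this]

lemma map_sub_add (k : ℕ) (l : List ℕ) (h : ∀ a ∈ l, k ≤ a) :
    (l.map (· - k)).map (· + k) = l := by
  induction l with
  | nil => simp
  | cons a t ih =>
      simp only [List.map_cons]
      rw [ih (fun b hb => h b (by simp [hb]))]
      have : a - k + k = a := by have := h a (by simp); omega
      simp [this]

lemma sorted_map_sub (k : ℕ) (l : List ℕ) (h : l.Pairwise (· ≤ ·)) :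
    (l.map (· - k)).Pairwise (· ≤ ·) := by
  rw [List.pairwise_map]
  exact h.imp (fun hab => by omega)

lemma all_of_head {A : List ℕ} (hA : A.Pairwise (· ≤ ·)) {P : ℕ → Prop}
    (hP : ∀ u v, u ≤ v → P u → P v) (h : ∀ a ∈ A.head?, P a) : ∀ a ∈ A, P a := by
  match A with
  | [] => simp
  | a0 :: A' =>
      intro a ha
      have h0 : P a0 := h a0 (by simp)
      rcases List.mem_cons.mp ha with rfl | hmem
      · exact h0
      · exact hP a0 a (List.rel_of_pairwise_cons hA hmem) h0

lemma cons_of_head? {l : List ℕ} {a : ℕ} (h : l.head? = some a) : ∃ t, l = a :: t := by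
  match l with
  | [] => simp at h
  | b :: t => simp at h; exact ⟨t, by rw [h]⟩

lemma hd1_bound4 (m v : ℕ) (ms vs : List ℕ) (hm : ∀ b ∈ ms, m ≤ b) (hbr : 2 * m + 1 ≤ 3 * v) :
    m + 4 ≤ hd1 (ms.map (· + 2)) ((v :: vs).map (· + 1)) := by
  match ms with
  | [] => simp [hd1]; omega
  | m' :: ms' =>
      have := hm m' (by simp)
      simp [hd1]
      split <;> omega

lemma G_F : ∀ ms vs : List ℕ, ms.Pairwise (· ≤ ·) → vs.Pairwise (· ≤ ·) →
    G (F ms vs) = (ms, vs) := by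
  intro ms vs
  induction ms, vs using F_induct' with
  | case1 => intro _ _; simp [F, G]
  | case2 m ms ih =>
      intro hm _
      obtain ⟨hmall, hms⟩ := List.pairwise_cons.mp hm
      have ih' := ih ((sorted_map_add 2 ms).mpr hms) (by simp)
      match ms with
      | [] => simp [F, G]
      | m' :: ms' =>
          have h1 : m ≤ m' := hmall m' (by simp)
          have hF : F (m :: (m' :: ms')) [] =
              (m + 2) :: F ((m' :: ms').map (· + 2)) [] := by simp [F]
          have hR : F ((m' :: ms').map (· + 2)) [] =
              (m' + 2 + 2) :: F ((ms'.map (· + 2)).map (· + 2)) [] := by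
            simp [F]
          rw [hF, hR]
          simp only [G, if_neg (by omega : ¬ (m' + 2 + 2 ≤ m + 2 + 1))]
          rw [← hR, ih']
          simp [map_add_sub, comp_add_sub]
  | case3 v vs ih =>
      intro _ hv
      obtain ⟨hvall, hvs⟩ := List.pairwise_cons.mp hv
      have ih' := ih (by simp) ((sorted_map_add 2 vs).mpr hvs)
      have hF : F [] (v :: vs) =
          (3 * v + 5) / 2 :: (3 * v + 5 - (3 * v + 5) / 2) :: F [] (vs.map (· + 2)) := by
        simp [F, bparts]
      rw [hF]
      simp only [G, if_pos (by omega : 3 * v + 5 - (3 * v + 5) / 2 ≤ (3 * v + 5) / 2 + 1)]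
      rw [ih']
      have hv3 : ((3 * v + 5) / 2 + (3 * v + 5 - (3 * v + 5) / 2) - 5) / 3 = v := by omega
      simp [map_add_sub, comp_add_sub, hv3]
  | case4 m ms v vs h ih =>
      intro hm hv
      obtain ⟨hmall, hms⟩ := List.pairwise_cons.mp hm
      have ih' := ih ((sorted_map_add 2 ms).mpr hms) ((sorted_map_add 1 (v :: vs)).mpr hv)
      have hF : F (m :: ms) (v :: vs) =
          (m + 2) :: F (ms.map (· + 2)) ((v :: vs).map (· + 1)) := by simp [F, h]
      have hRh := head?_F (ms.map (· + 2)) ((v :: vs).map (· + 1)) (by simp)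
      obtain ⟨t, hRt⟩ := cons_of_head? hRh
      have hd : m + 4 ≤ hd1 (ms.map (· + 2)) ((v :: vs).map (· + 1)) :=
        hd1_bound4 m v ms vs hmall h
      rw [hF, hRt]
      simp only [G, if_neg (by omega : ¬ (hd1 (ms.map (· + 2)) ((v :: vs).map (· + 1)) ≤ m + 2 + 1))]
      rw [← hRt, ih']
      simp [map_add_sub, comp_add_sub]
  | case5 m ms v vs h ih =>
      intro hm hv
      obtain ⟨hvall, hvs⟩ := List.pairwise_cons.mp hv
      have ih' := ih ((sorted_map_add 3 (m :: ms)).mpr hm) ((sorted_map_add 2 vs).mpr hvs)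
      have hF : F (m :: ms) (v :: vs) =
          (3 * v + 5) / 2 :: (3 * v + 5 - (3 * v + 5) / 2) ::
            F ((m :: ms).map (· + 3)) (vs.map (· + 2)) := by simp [F, h, bparts]
      rw [hF]
      simp only [G, if_pos (by omega : 3 * v + 5 - (3 * v + 5) / 2 ≤ (3 * v + 5) / 2 + 1)]
      rw [ih']
      have hv3 : ((3 * v + 5) / 2 + (3 * v + 5 - (3 * v + 5) / 2) - 5) / 3 = v := by omega
      simp [map_add_sub, comp_add_sub, hv3]

end KR4
namespace KR4

lemma F_G : ∀ l : List ℕ, Cond l →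
    (G l).1.Pairwise (· ≤ ·) ∧ (G l).2.Pairwise (· ≤ ·) ∧ F (G l).1 (G l).2 = l ∧
      (∀ a ∈ (G l).1.head?, ∀ x ∈ l.head?, x ≤ a + 2) ∧
      (∀ b ∈ (G l).2.head?, ∀ x ∈ l.head?, ∀ y ∈ l.tail.head?, x + y ≤ 3 * b + 5) := by
  intro l
  induction l using G.induct with
  | case1 => intro _; simp [G, F]
  | case2 x =>
      intro hc
      have hx : 2 ≤ x := (cond_cons.mp hc).1
      refine ⟨by simp [G], by simp [G], by simp [G, F]; omega, ?_, by simp [G]⟩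
      intro a ha x' hx'
      simp [G] at ha
      simp at hx'
      omega
  | case3 x y t hclose ih =>
      intro hc
      obtain ⟨hx2, hh1, ht1, hc2⟩ := cond_cons.mp hc
      simp only [List.tail_cons] at ht1
      have hxy : x ≤ y := (hh1 y (by simp)).1
      have hsum : (x + y) % 3 = 2 := (hh1 y (by simp)).2 hclose
      obtain ⟨hy2, hh2, ht2, hct⟩ := cond_cons.mp hc2
      obtain ⟨sA, sB, hFG, bndA, bndB⟩ := ih hct
      have hlen : t.length = (G t).1.length + 2 * (G t).2.length := by
        have := length_F (G t).1 (G t).2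
        rw [hFG] at this; omega
      have hAall : ∀ a ∈ (G t).1, x + 1 ≤ a := by
        apply all_of_head (P := fun a => _ ≤ a) sA (fun u v huv hu => by omega)
        intro a0 ha0
        cases t with
        | nil => simp [G] at ha0
        | cons t0 t' =>
          have h1 := bndA a0 ha0 t0 (by simp)
          have h2 := ht1 t0 (by simp)
          omega
      have hBall : ∀ b ∈ (G t).2, x + y + 1 ≤ 3 * b := by
        apply all_of_head (P := fun b => x + y + 1 ≤ 3 * b) sB (fun u v huv hu => by omega)
        intro b0 hb0
        cases t with
        | nil => simp [G] at hb0
        | cons t0 t' =>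
          cases t' with
          | nil => simp [G] at hb0
          | cons t1 t'' =>
            have h1 := bndB b0 hb0 t0 (by simp) t1 (by simp)
            have h2 := ht1 t0 (by simp)
            have h3 := ht2 t1 (by simp)
            omega
      have hxy5 : 5 ≤ x + y := by omega
      have hGl : G (x :: y :: t) =
          ((G t).1.map (· - 3), (x + y - 5) / 3 :: (G t).2.map (· - 2)) := by
        simp [G, hclose]
      set v := (x + y - 5) / 3 with hvdef
      have hv3 : 3 * v + 5 = x + y := by omega
      have hB2 : ∀ b ∈ (G t).2, 2 ≤ b := fun b hb => by have := hBall b hb; omega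
      have hA3 : ∀ a ∈ (G t).1, 3 ≤ a := fun a ha => by have := hAall a ha; omega
      have hbp : bparts (3 * v + 5) = [x, y] := by
        rw [hv3]; simp [bparts]; omega
      have hFnew : F ((G t).1.map (· - 3)) (v :: (G t).2.map (· - 2)) = x :: y :: t := by
        match hA : (G t).1 with
        | [] =>
            rw [show ([] : List ℕ).map (· - 3) = [] from rfl]
            have : F ([] : List ℕ) (v :: (G t).2.map (· - 2)) =
                bparts (3 * v + 5) ++ F [] (((G t).2.map (· - 2)).map (· + 2)) := by
              simp [F]
            rw [hA] at hFG
            rw [this, map_sub_add 2 _ hB2, hbp, hFG]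
            rfl
        | a0 :: A' =>
            have ha0 : x + 1 ≤ a0 := by
              have := hAall a0 (by rw [hA]; simp); omega
            have hbr : ¬ (2 * (a0 - 3) + 1 ≤ 3 * v) := by omega
            have : F ((a0 - 3) :: A'.map (· - 3)) (v :: (G t).2.map (· - 2)) =
                bparts (3 * v + 5) ++
                  F (((a0 - 3) :: A'.map (· - 3)).map (· + 3)) (((G t).2.map (· - 2)).map (· + 2)) := by
              simp [F, hbr]
            rw [List.map_cons, this, map_sub_add 2 _ hB2, hbp]
            have : ((a0 - 3) :: A'.map (· - 3)) = (G t).1.map (· - 3) := by rw [hA]; simp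
            rw [this, map_sub_add 3 _ hA3, hFG]
            rfl
      refine ⟨?_, ?_, ?_, ?_, ?_⟩
      · rw [hGl]; exact sorted_map_sub 3 _ sA
      · rw [hGl]
        simp only [List.pairwise_cons]
        refine ⟨?_, sorted_map_sub 2 _ sB⟩
        intro b' hb'
        obtain ⟨b, hb, rfl⟩ := List.mem_map.mp hb'
        have := hBall b hb; omega
      · rw [hGl]; exact hFnew
      · rw [hGl]
        intro a ha x' hx'
        simp only [List.head?_cons, Option.mem_def, Option.some.injEq] at hx'
        subst hx'
        match hA : (G t).1, ha with
        | a0 :: A', ha =>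
            have h1 := mem_some (by simpa using ha)
            have h2 := hAall a0 (by rw [hA]; simp)
            omega
        | [], ha => simp at ha
      · rw [hGl]
        intro b hb x' hx' y' hy'
        have hbv := mem_some (by simpa using hb)
        simp only [List.head?_cons, Option.mem_def, Option.some.injEq, List.tail_cons] at hx' hy'
        subst hx'; subst hy'
        omega
  | case4 x y t hnclose ih =>
      intro hc
      obtain ⟨hx2, hh1, ht1, hc2⟩ := cond_cons.mp hc
      simp only [List.tail_cons] at ht1
      have hxy : x + 2 ≤ y := by
        have := (hh1 y (by simp)).1; omega
      obtain ⟨hy2, hh2, ht2, hct⟩ := cond_cons.mp hc2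
      obtain ⟨sA, sB, hFG, bndA, bndB⟩ := ih hc2
      have hlen : (y :: t).length = (G (y :: t)).1.length + 2 * (G (y :: t)).2.length := by
        have := length_F (G (y :: t)).1 (G (y :: t)).2
        rw [hFG] at this; omega
      have hAall : ∀ a ∈ (G (y :: t)).1, x ≤ a := by
        apply all_of_head (P := fun a => _ ≤ a) sA (fun u v huv hu => by omega)
        intro a0 ha0
        have h1 := bndA a0 ha0 y (by simp)
        omega
      have hBall : ∀ b ∈ (G (y :: t)).2, 2 * x ≤ 3 * b ∧ x + y ≤ 3 * b + 2 := by
        apply all_of_head (P := fun b => 2 * x ≤ 3 * b ∧ x + y ≤ 3 * b + 2) sB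
          (fun u v huv hu => ⟨by omega, by omega⟩)
        intro b0 hb0
        cases t with
        | nil => simp [G] at hb0
        | cons t0 t' =>
          have h1 := bndB b0 hb0 y (by simp) t0 (by simp)
          have h2 := ht1 t0 (by simp)
          omega
      have hGl : G (x :: y :: t) =
          ((x - 2) :: (G (y :: t)).1.map (· - 2), (G (y :: t)).2.map (· - 1)) := by
        simp [G, hnclose]
      have hA2 : ∀ a ∈ (G (y :: t)).1, 2 ≤ a := fun a ha => by have := hAall a ha; omega
      have hB1 : ∀ b ∈ (G (y :: t)).2, 1 ≤ b := fun b hb => by have := (hBall b hb).1; omega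
      have hx22 : x - 2 + 2 = x := by omega
      have hFnew : F ((x - 2) :: (G (y :: t)).1.map (· - 2)) ((G (y :: t)).2.map (· - 1)) =
          x :: y :: t := by
        match hB : (G (y :: t)).2 with
        | [] =>
            have : F ((x - 2) :: (G (y :: t)).1.map (· - 2)) ([] : List ℕ) =
                (x - 2 + 2) :: F (((G (y :: t)).1.map (· - 2)).map (· + 2)) [] := by
              simp [F]
            rw [show (([] : List ℕ).map (· - 1)) = [] from rfl, this,
              map_sub_add 2 _ hA2, hx22, ← hB, hFG]
        | b0 :: B' =>
            have hb0 := (hBall b0 (by rw [hB]; simp)).1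
            have hbr : 2 * (x - 2) + 1 ≤ 3 * (b0 - 1) := by omega
            have : F ((x - 2) :: (G (y :: t)).1.map (· - 2)) ((b0 - 1) :: B'.map (· - 1)) =
                (x - 2 + 2) :: F (((G (y :: t)).1.map (· - 2)).map (· + 2))
                  (((b0 - 1) :: B'.map (· - 1)).map (· + 1)) := by
              simp [F, hbr]
            rw [List.map_cons, this, map_sub_add 2 _ hA2, hx22]
            have h2 : ((b0 - 1) :: B'.map (· - 1)) = (G (y :: t)).2.map (· - 1) := by
              rw [hB]; simp
            rw [h2, map_sub_add 1 _ hB1, hFG]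
      refine ⟨?_, ?_, ?_, ?_, ?_⟩
      · rw [hGl]
        simp only [List.pairwise_cons]
        refine ⟨?_, sorted_map_sub 2 _ sA⟩
        intro a' ha'
        obtain ⟨a, ha, rfl⟩ := List.mem_map.mp ha'
        have := hAall a ha; omega
      · rw [hGl]; exact sorted_map_sub 1 _ sB
      · rw [hGl]; exact hFnew
      · rw [hGl]
        intro a ha x' hx'
        have := mem_some (by simpa using ha)
        simp only [List.head?_cons, Option.mem_def, Option.some.injEq] at hx'
        omega
      · rw [hGl]
        intro b hb x' hx' y' hy'
        simp only [List.head?_cons, Option.mem_def, Option.some.injEq, List.tail_cons] at hx' hy'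
        subst hx'; subst hy'
        match hB : (G (y :: t)).2, hb with
        | b0 :: B', hb =>
            have h1 := mem_some (by simpa using hb)
            have h2 := (hBall b0 (by rw [hB]; simp)).2
            omega
        | [], hb => simp at hb

end KR4
namespace KR4

noncomputable def geom (d : ℕ) : PowerSeries ℚ :=
  PowerSeries.mk fun n => if d ∣ n then 1 else 0

lemma geom_mul (d : ℕ) (hd : 0 < d) : (1 - (X : PowerSeries ℚ) ^ d) * geom d = 1 := by
  ext n
  rw [sub_mul, one_mul, map_sub, PowerSeries.coeff_X_pow_mul', PowerSeries.coeff_one]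
  simp only [geom, PowerSeries.coeff_mk]
  by_cases h : d ≤ n
  · have hiff : d ∣ n ↔ d ∣ n - d := by
      constructor
      · intro hdn; exact (Nat.dvd_sub hdn dvd_rfl)
      · intro hdn
        have : n - d + d = n := by omega
        rw [← this]; exact Nat.dvd_add hdn dvd_rfl
    have hn0 : ¬ n = 0 := by omega
    rw [if_pos h, if_neg hn0]
    by_cases h2 : d ∣ n
    · rw [if_pos h2, if_pos (hiff.mp h2)]; ring
    · rw [if_neg h2, if_neg (fun hc => h2 (hiff.mpr hc))]; ring
  · rw [if_neg h, sub_zero]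
    by_cases h0 : n = 0
    · subst h0; simp
    · rw [if_neg h0, if_neg (fun hc : d ∣ n => by
        rcases hc with ⟨c, rfl⟩
        rcases c with _ | c
        · simp at h0
        · exact h (by nlinarith))]

lemma constCoeff_one_sub_X_pow (d : ℕ) (hd : 0 < d) :
    PowerSeries.constantCoeff (1 - (X : PowerSeries ℚ) ^ d) = 1 := by
  rw [map_sub, map_one, map_pow]
  simp [PowerSeries.constantCoeff_X, zero_pow (by omega : d ≠ 0)]

lemma qq_qcube_inv (a b : ℕ) :
    (qq a * qcube b)⁻¹ =
      (∏ j ∈ Finset.range a, geom (j + 1)) * ∏ j ∈ Finset.range b, geom (3 * (j + 1)) := by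
  rw [eq_comm, PowerSeries.eq_inv_iff_mul_eq_one]
  · rw [qq, qcube, mul_mul_mul_comm, mul_comm (∏ j ∈ Finset.range a, geom (j + 1)) _,
      mul_comm (∏ j ∈ Finset.range b, geom (3 * (j + 1))) _,
      ← Finset.prod_mul_distrib, ← Finset.prod_mul_distrib]
    rw [Finset.prod_congr rfl (fun j _ => geom_mul (j + 1) (by omega)),
      Finset.prod_congr rfl (fun j _ => geom_mul (3 * (j + 1)) (by omega))]
    simp
  · rw [map_mul, qq, qcube, map_prod, map_prod]
    rw [Finset.prod_congr rfl (fun j _ => constCoeff_one_sub_X_pow (j + 1) (by omega)),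
      Finset.prod_congr rfl (fun j _ => constCoeff_one_sub_X_pow (3 * (j + 1)) (by omega))]
    simp

end KR4
namespace KR4

noncomputable def prodGeom (D : List ℕ) : PowerSeries ℚ := (D.map geom).prod

def sols : List ℕ → ℕ → Finset (List ℕ)
  | [], k => if k = 0 then {[]} else ∅
  | d :: D, k => (Finset.range (k + 1)).biUnion
      (fun j => if d ∣ j then (sols D (k - j)).image (List.cons (j / d)) else ∅)

lemma mem_sols : ∀ (D : List ℕ), (∀ d ∈ D, 0 < d) → ∀ (k : ℕ) (e : List ℕ),
    e ∈ sols D k ↔ e.length = D.length ∧ (List.zipWith (· * ·) D e).sum = k := by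
  intro D
  induction D with
  | nil =>
      intro _ k e
      constructor
      · intro he
        by_cases h : k = 0
        · subst h; simp [sols] at he; subst he; simp
        · simp [sols, h] at he
      · rintro ⟨h1, h2⟩
        have : e = [] := List.length_eq_zero_iff.mp (by simpa using h1)
        subst this
        simp at h2
        simp [sols, ← h2]
  | cons d D ih =>
      intro hpos k e
      have hd : 0 < d := hpos d (by simp)
      have ihD := ih (fun x hx => hpos x (by simp [hx]))
      constructor
      · intro he
        simp only [sols, Finset.mem_biUnion, Finset.mem_range] at he
        obtain ⟨j, hj, hmem⟩ := he
        by_cases hdj : d ∣ j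
        · rw [if_pos hdj] at hmem
          obtain ⟨e', he', rfl⟩ := Finset.mem_image.mp hmem
          obtain ⟨hl, hs⟩ := (ihD _ e').mp he'
          refine ⟨by simp [hl], ?_⟩
          simp only [List.zipWith_cons_cons, List.sum_cons, hs]
          have : d * (j / d) = j := Nat.mul_div_cancel' hdj
          omega
        · rw [if_neg hdj] at hmem; simp at hmem
      · rintro ⟨hl, hs⟩
        match e with
        | e0 :: e' =>
          simp only [List.zipWith_cons_cons, List.sum_cons] at hs
          simp only [sols, Finset.mem_biUnion, Finset.mem_range]
          refine ⟨d * e0, by omega, ?_⟩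
          rw [if_pos (Dvd.intro e0 rfl)]
          refine Finset.mem_image.mpr ⟨e', ?_, ?_⟩
          · exact (ihD _ e').mpr ⟨by simpa using hl, by omega⟩
          · rw [Nat.mul_div_cancel_left e0 hd]
      

lemma card_sols : ∀ (D : List ℕ), (∀ d ∈ D, 0 < d) → ∀ k : ℕ,
    ((sols D k).card : ℚ) = PowerSeries.coeff k (prodGeom D) := by
  intro D
  induction D with
  | nil =>
      intro _ k
      by_cases h : k = 0 <;> simp [sols, prodGeom, h]
  | cons d D ih =>
      intro hpos k
      have hd : 0 < d := hpos d (by simp)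
      have ihD := ih (fun x hx => hpos x (by simp [hx]))
      have hPG : prodGeom (d :: D) = geom d * prodGeom D := by simp [prodGeom]
      rw [hPG, PowerSeries.coeff_mul, Finset.Nat.sum_antidiagonal_eq_sum_range_succ_mk]
      have hco : ∀ j ∈ Finset.range (k + 1),
          (PowerSeries.coeff j (geom d)) * PowerSeries.coeff (k - j) (prodGeom D) =
            ((if d ∣ j then (sols D (k - j)).image (List.cons (j / d)) else ∅).card : ℚ) := by
        intro j hj
        by_cases hdj : d ∣ j
        · rw [if_pos hdj, Finset.card_image_of_injective _ (fun x y hxy => by simpa using hxy),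
            ihD]
          simp [geom, PowerSeries.coeff_mk, hdj]
        · rw [if_neg hdj]
          simp [geom, PowerSeries.coeff_mk, hdj]
      rw [Finset.sum_congr rfl hco]
      rw [sols]
      rw [Finset.card_biUnion]
      · push_cast; rfl
      · intro j1 h1 j2 h2 hne
        simp only [Finset.disjoint_left]
        intro e he1 he2
        by_cases hd1 : d ∣ j1
        · by_cases hd2 : d ∣ j2
          · rw [if_pos hd1] at he1; rw [if_pos hd2] at he2
            obtain ⟨x1, _, hx1⟩ := Finset.mem_image.mp he1
            obtain ⟨x2, _, hx2⟩ := Finset.mem_image.mp he2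
            apply hne
            have : j1 / d = j2 / d := by
              rw [← hx1] at hx2; exact (List.cons.injEq _ _ _ _).mp hx2 |>.1 |>.symm
            calc j1 = d * (j1 / d) := (Nat.mul_div_cancel' hd1).symm
              _ = d * (j2 / d) := by rw [this]
              _ = j2 := Nat.mul_div_cancel' hd2
          · rw [if_neg hd2] at he2; simp at he2
        · rw [if_neg hd1] at he1; simp at he1

end KR4
namespace KR4

def weights (a : ℕ) : List ℕ := (List.range a).map (fun j => a - j)

def build : List ℕ → List ℕ
  | [] => []
  | d :: ds => d :: (build ds).map (· + d)

def unbuild : List ℕ → List ℕ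
  | [] => []
  | x :: xs => x :: unbuild (xs.map (· - x))
  termination_by l => l.length
  decreasing_by simp

@[simp] lemma length_build : ∀ ds : List ℕ, (build ds).length = ds.length
  | [] => by simp [build]
  | d :: ds => by simp [build, length_build ds]

@[simp] lemma length_unbuild : ∀ l : List ℕ, (unbuild l).length = l.length := by
  intro l
  induction l using unbuild.induct with
  | case1 => simp [unbuild]
  | case2 x xs ih => simp [unbuild]; simpa using ih

lemma sorted_build : ∀ ds : List ℕ, (build ds).Pairwise (· ≤ ·)
  | [] => by simp [build]
  | d :: ds => by
      simp only [build, List.pairwise_cons]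
      constructor
      · intro b hb
        obtain ⟨z, _, rfl⟩ := List.mem_map.mp hb
        omega
      · exact (sorted_map_add d (build ds)).mpr (sorted_build ds)

lemma unbuild_build : ∀ ds : List ℕ, unbuild (build ds) = ds
  | [] => by simp [build, unbuild]
  | d :: ds => by
      simp only [build, unbuild, map_add_sub]
      rw [unbuild_build ds]

lemma build_unbuild : ∀ l : List ℕ, l.Pairwise (· ≤ ·) → build (unbuild l) = l := by
  intro l
  induction l using unbuild.induct with
  | case1 => intro _; simp [build, unbuild]
  | case2 x xs ih =>
      intro hs
      obtain ⟨hall, hxs⟩ := List.pairwise_cons.mp hs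
      simp only [unbuild, build]
      have ih' : (xs.map (· - x)).Pairwise (· ≤ ·) →
          build (unbuild (xs.map (· - x))) = xs.map (· - x) := by simpa using ih
      rw [ih' (sorted_map_sub x xs hxs)]
      rw [map_sub_add x xs hall]

lemma weights_succ (a : ℕ) : weights (a + 1) = (a + 1) :: weights a := by
  simp only [weights, List.range_succ_eq_map, List.map_cons, List.map_map, Nat.sub_zero]
  congr 1
  apply List.map_congr_left
  intro j _
  show a + 1 - (j + 1) = a - j
  omega

lemma weights_pos (a : ℕ) : ∀ d ∈ weights a, 0 < d := by
  intro d hd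
  obtain ⟨j, hj, rfl⟩ := List.mem_map.mp hd
  simp at hj
  omega

@[simp] lemma length_weights (a : ℕ) : (weights a).length = a := by simp [weights]

lemma sum_build : ∀ ds : List ℕ, (build ds).sum = (List.zipWith (· * ·) (weights ds.length) ds).sum
  | [] => by simp [build, weights]
  | d :: ds => by
      simp only [build, List.sum_cons, List.length_cons, weights_succ, List.zipWith_cons_cons]
      rw [sum_map_add, sum_build ds, length_build]
      ring

lemma perm_weights : ∀ a : ℕ, (weights a).Perm ((List.range a).map (fun j => j + 1))
  | 0 => by simp [weights]
  | a + 1 => by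
      rw [weights_succ, List.range_succ, List.map_append]
      refine List.Perm.trans (List.Perm.cons _ (perm_weights a)) ?_
      simpa using (List.perm_append_singleton (a + 1) ((List.range a).map (fun j => j + 1))).symm

lemma prod_list_range (f : ℕ → PowerSeries ℚ) : ∀ a : ℕ,
    (((List.range a).map f)).prod = ∏ j ∈ Finset.range a, f j
  | 0 => by simp
  | a + 1 => by
      rw [List.range_succ, Finset.prod_range_succ, List.map_append, List.prod_append,
        prod_list_range f a]
      simp

lemma prodGeom_weights (a : ℕ) : prodGeom (weights a) = ∏ j ∈ Finset.range a, geom (j + 1) := by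
  rw [prodGeom, ← prod_list_range (fun j => geom (j + 1)) a]
  have := (perm_weights a).map geom
  rw [this.prod_eq]
  congr 1
  rw [List.map_map]
  rfl

lemma prodGeom_weights3 (b : ℕ) :
    prodGeom ((weights b).map (fun w => 3 * w)) = ∏ j ∈ Finset.range b, geom (3 * (j + 1)) := by
  rw [prodGeom, ← prod_list_range (fun j => geom (3 * (j + 1))) b]
  have := ((perm_weights b).map (fun w => 3 * w)).map geom
  rw [this.prod_eq]
  congr 1
  rw [List.map_map, List.map_map]
  rfl

lemma zipWith_map3 : ∀ (l e : List ℕ),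
    (List.zipWith (· * ·) (l.map (fun w => 3 * w)) e).sum = 3 * (List.zipWith (· * ·) l e).sum
  | [], e => by simp
  | d :: l, [] => by simp
  | d :: l, x :: e => by
      simp only [List.map_cons, List.zipWith_cons_cons, List.sum_cons, zipWith_map3 l e]
      ring

end KR4
namespace KR4

def wlist (a b : ℕ) : List ℕ := weights a ++ (weights b).map (fun w => 3 * w)

lemma wlist_pos (a b : ℕ) : ∀ d ∈ wlist a b, 0 < d := by
  intro d hd
  rcases List.mem_append.mp hd with h | h
  · exact weights_pos a d h
  · obtain ⟨w, hw, rfl⟩ := List.mem_map.mp h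
    have := weights_pos b w hw; omega

@[simp] lemma length_wlist (a b : ℕ) : (wlist a b).length = a + b := by simp [wlist]

lemma prodGeom_wlist (a b : ℕ) :
    prodGeom (wlist a b) =
      (∏ j ∈ Finset.range a, geom (j + 1)) * ∏ j ∈ Finset.range b, geom (3 * (j + 1)) := by
  rw [← prodGeom_weights, ← prodGeom_weights3]
  simp [prodGeom, wlist]

def toL (a : ℕ) (e : List ℕ) : List ℕ := F (build (e.take a)) (build (e.drop a))

lemma zipsum_wlist (a b : ℕ) (e : List ℕ) (he : e.length = a + b) :
    (List.zipWith (· * ·) (wlist a b) e).sum =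
      (build (e.take a)).sum + 3 * (build (e.drop a)).sum := by
  have h1 : (e.take a).length = a := by simp [he]
  have h2 : (e.drop a).length = b := by simp [he]
  conv_lhs => rw [← List.take_append_drop a e]
  rw [wlist, List.zipWith_append (by simp [h1]), List.sum_append,
    zipWith_map3, sum_build, sum_build, h1, h2]

lemma cond_iff (n m : ℕ) (l : List ℕ) :
    (IsPartitionOf n l ∧ l.length = m ∧ (∀ x ∈ l, 2 ≤ x) ∧ DiffCond 3 2 l ∧ SumCond2 2 l) ↔
      (Cond l ∧ l.sum = n ∧ l.length = m) := by
  unfold IsPartitionOf Cond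
  constructor
  · rintro ⟨⟨hs, hp, hsum⟩, hlen, h2, hd, hc⟩
    exact ⟨⟨hs, h2, hd, hc⟩, hsum, hlen⟩
  · rintro ⟨⟨hs, h2, hd, hc⟩, hsum, hlen⟩
    exact ⟨⟨hs, fun x hx => by have := h2 x hx; omega, hsum⟩, hlen, h2, hd, hc⟩

def solsP (n : ℕ) (p : ℕ × ℕ) : Finset (List ℕ) :=
  if base p.1 p.2 ≤ n then sols (wlist p.1 p.2) (n - base p.1 p.2) else ∅

lemma mem_toL_image (n m : ℕ) (p : ℕ × ℕ) (hm : p.1 + 2 * p.2 = m) (l : List ℕ) :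
    l ∈ (solsP n p).image (toL p.1) ↔
      Cond l ∧ l.sum = n ∧ l.length = m ∧ (G l).1.length = p.1 ∧ (G l).2.length = p.2 := by
  constructor
  · intro hl
    obtain ⟨e, he, rfl⟩ := Finset.mem_image.mp hl
    unfold solsP at he
    split_ifs at he with hbase
    swap
    · simp at he
    obtain ⟨helen, hesum⟩ := (mem_sols _ (wlist_pos p.1 p.2) _ e).mp he
    simp only [length_wlist] at helen
    have h1 : (e.take p.1).length = p.1 := by simp [helen]
    have h2 : (e.drop p.1).length = p.2 := by simp [helen]
    have sA := sorted_build (e.take p.1)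
    have sB := sorted_build (e.drop p.1)
    obtain ⟨hC, _, _⟩ := main (build (e.take p.1)) (build (e.drop p.1)) sA sB
    have hsum : (toL p.1 e).sum = n := by
      rw [toL, sum_F, length_build, length_build, h1, h2]
      rw [zipsum_wlist p.1 p.2 e helen] at hesum
      omega
    have hlen : (toL p.1 e).length = m := by
      rw [toL, length_F, length_build, length_build, h1, h2, hm]
    have hGF := G_F _ _ sA sB
    refine ⟨hC, hsum, hlen, ?_, ?_⟩
    · rw [toL, hGF]; simp [h1]
    · rw [toL, hGF]; simp [h2]
  · rintro ⟨hC, hsum, hlen, hp1, hp2⟩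
    obtain ⟨sA, sB, hFG, _, _⟩ := F_G l hC
    have hSF := sum_F (G l).1 (G l).2
    rw [hFG, hsum] at hSF
    have hbase : base p.1 p.2 ≤ n := by rw [← hp1, ← hp2]; omega
    set e : List ℕ := unbuild (G l).1 ++ unbuild (G l).2 with hedef
    have helen : e.length = p.1 + p.2 := by simp [hedef, hp1, hp2]
    have htake : e.take p.1 = unbuild (G l).1 := by
      rw [hedef, ← hp1, ← length_unbuild]
      exact List.take_left
    have hdrop : e.drop p.1 = unbuild (G l).2 := by
      rw [hedef, ← hp1, ← length_unbuild]
      exact List.drop_left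
    have hbt : build (e.take p.1) = (G l).1 := by rw [htake, build_unbuild _ sA]
    have hbd : build (e.drop p.1) = (G l).2 := by rw [hdrop, build_unbuild _ sB]
    refine Finset.mem_image.mpr ⟨e, ?_, ?_⟩
    · unfold solsP
      rw [if_pos hbase]
      refine (mem_sols _ (wlist_pos p.1 p.2) _ e).mpr ⟨by simp [helen], ?_⟩
      rw [zipsum_wlist p.1 p.2 e helen, hbt, hbd, ← hp1, ← hp2]
      omega
    · rw [toL, hbt, hbd, hFG]

lemma final (n m : ℕ) :
    (kr4 n m : ℚ) =
      ∑ p ∈ (Finset.range (m + 1) ×ˢ Finset.range (m + 1)).filter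
          (fun p => p.1 + 2 * p.2 = m),
        PowerSeries.coeff n
          ((X : PowerSeries ℚ) ^ (3 * p.2 ^ 2 + 2 * p.2 + p.1 ^ 2 + p.1 + 3 * p.1 * p.2) *
            (qq p.1 * qcube p.2)⁻¹) := by
  classical
  set P := (Finset.range (m + 1) ×ˢ Finset.range (m + 1)).filter
      (fun p => p.1 + 2 * p.2 = m) with hPdef
  have hsummand : ∀ p ∈ P,
      PowerSeries.coeff n
          ((X : PowerSeries ℚ) ^ (3 * p.2 ^ 2 + 2 * p.2 + p.1 ^ 2 + p.1 + 3 * p.1 * p.2) *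
            (qq p.1 * qcube p.2)⁻¹) = ((solsP n p).card : ℚ) := by
    intro p _
    have hb : 3 * p.2 ^ 2 + 2 * p.2 + p.1 ^ 2 + p.1 + 3 * p.1 * p.2 = base p.1 p.2 := rfl
    rw [hb, qq_qcube_inv, ← prodGeom_wlist, PowerSeries.coeff_X_pow_mul']
    unfold solsP
    split_ifs with h
    · rw [← card_sols _ (wlist_pos _ _)]
    · simp
  rw [Finset.sum_congr rfl hsummand]
  have hset : {l : List ℕ |
      IsPartitionOf n l ∧ l.length = m ∧ (∀ x ∈ l, 2 ≤ x) ∧ DiffCond 3 2 l ∧ SumCond2 2 l}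
      = ↑(P.biUnion (fun p => (solsP n p).image (toL p.1))) := by
    ext l
    simp only [Set.mem_setOf_eq, Finset.coe_biUnion, Set.mem_iUnion, Finset.mem_coe]
    rw [cond_iff n m l]
    constructor
    · rintro ⟨hc, hsum, hlen⟩
      obtain ⟨sA, sB, hFG, _, _⟩ := F_G l hc
      have hL := length_F (G l).1 (G l).2
      rw [hFG, hlen] at hL
      refine ⟨((G l).1.length, (G l).2.length), ?_, ?_⟩
      · simp only [hPdef, Finset.mem_coe, Finset.mem_filter, Finset.mem_product,
          Finset.mem_range]
        omega
      · rw [mem_toL_image n m _ (by omega) l]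
        exact ⟨hc, hsum, hlen, rfl, rfl⟩
    · rintro ⟨p, hpP, hpl⟩
      have hm : p.1 + 2 * p.2 = m := by
        have hpP' := hpP
        rw [hPdef] at hpP'
        exact (Finset.mem_filter.mp hpP').2
      obtain ⟨hc, hsum, hlen, _, _⟩ := (mem_toL_image n m p hm l).mp hpl
      exact ⟨hc, hsum, hlen⟩
  have hkr : kr4 n m = (P.biUnion (fun p => (solsP n p).image (toL p.1))).card := by
    unfold kr4
    rw [hset, Set.ncard_coe_finset]
  have hdisj : ∀ p ∈ P, ∀ q ∈ P, p ≠ q →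
      Disjoint ((solsP n p).image (toL p.1)) ((solsP n q).image (toL q.1)) := by
    intro p hp q hq hne
    rw [Finset.disjoint_left]
    intro l hlp hlq
    have hp' := hp; have hq' := hq
    rw [hPdef] at hp' hq'
    have hmp : p.1 + 2 * p.2 = m := (Finset.mem_filter.mp hp').2
    have hmq : q.1 + 2 * q.2 = m := (Finset.mem_filter.mp hq').2
    obtain ⟨_, _, _, hp1, hp2⟩ := (mem_toL_image n m p hmp l).mp hlp
    obtain ⟨_, _, _, hq1, hq2⟩ := (mem_toL_image n m q hmq l).mp hlq
    exact hne (Prod.ext (by omega) (by omega))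
  have hinj : ∀ p ∈ P, Set.InjOn (toL p.1) ↑(solsP n p) := by
    intro p _
    intro e1 h1 e2 h2 heq
    simp only [Finset.mem_coe] at h1 h2
    unfold solsP at h1 h2
    split_ifs at h1 h2 with hbase
    · obtain ⟨hl1, _⟩ := (mem_sols _ (wlist_pos p.1 p.2) _ e1).mp h1
      obtain ⟨hl2, _⟩ := (mem_sols _ (wlist_pos p.1 p.2) _ e2).mp h2
      have hG1 := G_F (build (e1.take p.1)) (build (e1.drop p.1))
        (sorted_build _) (sorted_build _)
      have hG2 := G_F (build (e2.take p.1)) (build (e2.drop p.1))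
        (sorted_build _) (sorted_build _)
      rw [toL, toL] at heq
      rw [heq] at hG1
      rw [hG2] at hG1
      have ht : build (e2.take p.1) = build (e1.take p.1) := congrArg Prod.fst hG1
      have hd : build (e2.drop p.1) = build (e1.drop p.1) := congrArg Prod.snd hG1
      have ht' : e2.take p.1 = e1.take p.1 := by
        rw [← unbuild_build (e2.take p.1), ← unbuild_build (e1.take p.1), ht]
      have hd' : e2.drop p.1 = e1.drop p.1 := by
        rw [← unbuild_build (e2.drop p.1), ← unbuild_build (e1.drop p.1), hd]
      rw [← List.take_append_drop p.1 e1, ← List.take_append_drop p.1 e2, ht', hd']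
    · simp at h1
  rw [hkr, Finset.card_biUnion hdisj]
  push_cast
  refine Finset.sum_congr rfl ?_
  intro p hp
  rw [Finset.card_image_of_injOn (hinj p hp)]

end KR4

/-- Theorem 3.4: the generating function for `kr₄`, coefficient of `q^n x^m`. -/
theorem kr4_generating_function (n m : ℕ) :
    (kr4 n m : ℚ) =
      ∑ p ∈ (Finset.range (m + 1) ×ˢ Finset.range (m + 1)).filter
          (fun p => p.1 + 2 * p.2 = m),
        PowerSeries.coeff n
          ((X : PowerSeries ℚ) ^ (3 * p.2 ^ 2 + 2 * p.2 + p.1 ^ 2 + p.1 + 3 * p.1 * p.2) * (qq p.1 * qcube p.2)⁻¹) := by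
  exact KR4.final n m
end

section
/- Let kr^b_1(n,m) count partitions of n into m parts with difference at least three at distance two such that if two successive parts differ by at most one, their sum is ≡ 1 (mod 3). Then ∑_{n,m≥0} kr^b_1(n,m) q^n x^m = ∑_{n_1,n_2≥0} q^{3n_2² + n_2 + n_1² + 3n_1 n_2} x^{2n_2 + n_1} / ((q;q)_{n_1} (q³;q³)_{n_2}). -/
open Finset PowerSeries

/-- `kr₁ᵇ n m`: partitions of `n` into `m` parts with difference at least three at
distance two such that close successive sums are ≡ 1 (mod 3). -/
noncomputable def krb1 (n m : ℕ) : ℕ :=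
  Set.ncard {l : List ℕ |
    IsPartitionOf n l ∧ l.length = m ∧ DiffCond 3 2 l ∧ SumCond2 1 l}

def pl (c : ℕ) : ℕ := 2 + 3 * c / 2
def ph (c : ℕ) : ℕ := pl c + c % 2

lemma pl_add_ph (c : ℕ) : pl c + ph c = 4 + 3 * c := by unfold ph pl; omega

def buildC : ℕ → ℕ → List ℕ → List ℕ → List ℕ
  | _, _, [], [] => []
  | a, b, m₀ :: mt, [] => (m₀ + 1 + 2*a + 3*b) :: buildC (a+1) b mt []
  | a, b, [], d₀ :: dt => pl (d₀ + a + 2*b) :: ph (d₀ + a + 2*b) :: buildC a (b+1) [] dt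
  | a, b, m₀ :: mt, d₀ :: dt =>
    if 2*m₀ + a + (d₀ + a) % 2 ≤ 3*d₀ then
      (m₀ + 1 + 2*a + 3*b) :: buildC (a+1) b mt (d₀ :: dt)
    else
      pl (d₀ + a + 2*b) :: ph (d₀ + a + 2*b) :: buildC a (b+1) (m₀ :: mt) dt
  termination_by _ _ μ d => μ.length + d.length

lemma length_buildC (a b : ℕ) (μ d : List ℕ) :
    (buildC a b μ d).length = μ.length + 2 * d.length := by
  induction a, b, μ, d using buildC.induct <;> simp [buildC, *] <;> omega

lemma sum_buildC (a b : ℕ) (μ d : List ℕ) :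
    (buildC a b μ d).sum = μ.length^2 + 3*μ.length*d.length + 3*d.length^2 + d.length
      + (2*a+3*b) * μ.length + (3*a+6*b) * d.length + μ.sum + 3 * d.sum := by
  induction a, b, μ, d using buildC.induct with
  | case1 => simp [buildC]
  | case2 a b m₀ mt ih => simp [buildC, ih]; zify; ring
  | case3 a b d₀ dt ih =>
      have key := pl_add_ph (d₀ + a + 2*b)
      simp [buildC, ih]
      zify at key ⊢
      linear_combination key
  | case4 a b m₀ mt d₀ dt h ih => simp [buildC, if_pos h, ih]; zify; ring
  | case5 a b m₀ mt d₀ dt h ih =>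
      have key := pl_add_ph (d₀ + a + 2*b)
      simp [buildC, if_neg h, ih]
      zify at key ⊢
      linear_combination key

lemma two_pl (c : ℕ) : 2 * pl c + c % 2 = 4 + 3 * c := by unfold pl; omega
lemma two_ph (c : ℕ) : 2 * ph c = 4 + 3 * c + c % 2 := by unfold ph pl; omega
lemma pl_ph_eq (c x y : ℕ) (h1 : x ≤ y) (h2 : y ≤ x + 1) (h3 : x + y = 4 + 3*c) :
    x = pl c ∧ y = ph c := by have := two_pl c; have := two_ph c; omega


inductive Ok : List ℕ → Prop
  | nil : Ok []
  | cons (a : ℕ) (l : List ℕ) (h1 : 1 ≤ a)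
      (h2 : ∀ b ∈ l.head?, a ≤ b ∧ (b ≤ a + 1 → (a + b) % 3 = 1))
      (h3 : ∀ c ∈ l.tail.head?, a + 3 ≤ c) (h4 : Ok l) : Ok (a :: l)

lemma diffCond_cons {a : ℕ} {l : List ℕ} :
    DiffCond 3 2 (a :: l) ↔ (∀ c ∈ l.tail.head?, a + 3 ≤ c) ∧ DiffCond 3 2 l := by
  constructor
  · intro h
    refine ⟨?_, fun j hj => ?_⟩
    · intro c hc
      match l, hc with
      | x :: y :: t, hc =>
        simp only [List.tail_cons, List.head?_cons, Option.mem_def, Option.some.injEq] at hc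
        subst hc
        exact h 0 (by simp)
    · have := h (j+1) (by simp only [List.length_cons]; omega)
      simpa using this
  · rintro ⟨h1, h2⟩ j hj
    match j, hj with
    | 0, hj =>
      match l, hj with
      | x :: y :: t, _ => exact h1 y (by simp)
    | j+1, hj =>
      have := h2 j (by simp only [List.length_cons] at hj; omega)
      simpa using this

lemma sumCond2_cons {a : ℕ} {l : List ℕ} :
    SumCond2 1 (a :: l) ↔ (∀ b ∈ l.head?, b ≤ a + 1 → (a + b) % 3 = 1) ∧ SumCond2 1 l := by
  constructor
  · intro h
    refine ⟨?_, fun j hj => ?_⟩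
    · intro b hb
      match l, hb with
      | x :: t, hb =>
        simp only [List.head?_cons, Option.mem_def, Option.some.injEq] at hb
        subst hb
        exact h 0 (by simp)
    · have := h (j+1) (by simp only [List.length_cons]; omega)
      simpa using this
  · rintro ⟨h1, h2⟩ j hj
    match j, hj with
    | 0, hj =>
      match l, hj with
      | x :: t, _ => exact h1 x (by simp)
    | j+1, hj =>
      have := h2 j (by simp only [List.length_cons] at hj; omega)
      simpa using this

lemma sorted_cons' {a : ℕ} {l : List ℕ} :
    (a :: l).Pairwise (· ≤ ·) ↔ (∀ b ∈ l.head?, a ≤ b) ∧ l.Pairwise (· ≤ ·) := by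
  rw [← List.isChain_iff_pairwise, ← List.isChain_iff_pairwise, List.isChain_cons]

lemma ok_iff (l : List ℕ) :
    Ok l ↔ (l.Pairwise (· ≤ ·) ∧ (∀ x ∈ l, 0 < x) ∧ DiffCond 3 2 l ∧ SumCond2 1 l) := by
  induction l with
  | nil =>
    simp only [List.Pairwise.nil, List.not_mem_nil, false_implies, implies_true, true_and]
    constructor
    · intro _; exact ⟨fun j hj => by simp at hj, fun j hj => by simp at hj⟩
    · intro _; exact Ok.nil
  | cons a l ih =>
    constructor
    · rintro (_ | ⟨_, _, h1, h2, h3, h4⟩)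
      obtain ⟨hs, hp, hd, hc⟩ := ih.mp h4
      refine ⟨sorted_cons'.mpr ⟨fun b hb => (h2 b hb).1, hs⟩,
        fun x hx => ?_, diffCond_cons.mpr ⟨h3, hd⟩,
        sumCond2_cons.mpr ⟨fun b hb => (h2 b hb).2, hc⟩⟩
      rcases List.mem_cons.mp hx with rfl | hx
      · exact h1
      · exact hp x hx
    · rintro ⟨hs, hp, hd, hc⟩
      rw [sorted_cons'] at hs
      rw [diffCond_cons] at hd
      rw [sumCond2_cons] at hc
      exact Ok.cons a l (hp a (by simp))
        (fun b hb => ⟨hs.1 b hb, hc.1 b hb⟩) hd.1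
        (ih.mpr ⟨hs.2, fun x hx => hp x (by simp [hx]), hd.2, hc.2⟩)

lemma head_lb (a b : ℕ) (μ d : List ℕ) (v : ℕ)
    (H1 : ∀ m₀ ∈ μ.head?, v ≤ m₀ + 1 + 2*a + 3*b)
    (H2 : ∀ d₀ ∈ d.head?, v ≤ pl (d₀ + a + 2*b)) :
    ∀ x ∈ (buildC a b μ d).head?, v ≤ x := by
  intro x hx
  match μ, d with
  | [], [] => simp [buildC] at hx
  | m₀ :: mt, [] =>
    simp only [buildC, List.head?_cons, Option.mem_def, Option.some.injEq] at hx
    exact hx ▸ H1 m₀ (by simp)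
  | [], d₀ :: dt =>
    simp only [buildC, List.head?_cons, Option.mem_def, Option.some.injEq] at hx
    exact hx ▸ H2 d₀ (by simp)
  | m₀ :: mt, d₀ :: dt =>
    rw [buildC] at hx
    split_ifs at hx <;>
      simp only [List.head?_cons, Option.mem_def, Option.some.injEq] at hx
    · exact hx ▸ H1 m₀ (by simp)
    · exact hx ▸ H2 d₀ (by simp)

lemma second_lb (a b : ℕ) (μ d : List ℕ) (v : ℕ)
    (H1 : ∀ m₁ ∈ μ.tail.head?, v ≤ m₁ + 3 + 2*a + 3*b)
    (H2 : ∀ d₀ ∈ d.head?, v ≤ pl (d₀ + a + 1 + 2*b))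
    (H3 : ∀ d₀ ∈ d.head?, v ≤ ph (d₀ + a + 2*b)) :
    ∀ y ∈ (buildC a b μ d).tail.head?, v ≤ y := by
  intro y hy
  match μ, d with
  | [], [] => simp [buildC] at hy
  | m₀ :: mt, [] =>
    rw [buildC] at hy
    simp only [List.tail_cons] at hy
    refine head_lb (a+1) b mt [] v ?_ ?_ y hy
    · intro m₁ hm₁
      have := H1 m₁ (by simpa using hm₁)
      omega
    · simp
  | [], d₀ :: dt =>
    rw [buildC] at hy
    simp only [List.tail_cons, List.head?_cons, Option.mem_def, Option.some.injEq] at hy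
    exact hy ▸ H3 d₀ (by simp)
  | m₀ :: mt, d₀ :: dt =>
    rw [buildC] at hy
    split_ifs at hy
    · simp only [List.tail_cons] at hy
      refine head_lb (a+1) b mt (d₀ :: dt) v ?_ ?_ y hy
      · intro m₁ hm₁
        have := H1 m₁ (by simpa using hm₁)
        omega
      · intro e he
        have := H2 e he
        have h2 : e + (a+1) + 2*b = e + a + 1 + 2*b := by omega
        rw [h2]
        exact this
    · simp only [List.tail_cons, List.head?_cons, Option.mem_def, Option.some.injEq] at hy
      exact hy ▸ H3 d₀ (by simp)

theorem ok_buildC (a b : ℕ) (μ d : List ℕ)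
    (hμ : μ.Pairwise (· ≤ ·)) (hd : d.Pairwise (· ≤ ·)) : Ok (buildC a b μ d) := by
  induction a, b, μ, d using buildC.induct with
  | case1 a b => rw [buildC]; exact Ok.nil
  | case2 a b m₀ mt ih =>
    rw [buildC]
    have hmt := (List.pairwise_cons.mp hμ)
    refine Ok.cons _ _ (by omega) ?_ ?_ (ih hmt.2 hd)
    · intro y hy
      have : m₀ + 1 + 2*a + 3*b + 2 ≤ y := by
        refine head_lb (a+1) b mt [] _ ?_ (by simp) y hy
        intro m₁ hm₁
        have := hmt.1 m₁ (List.mem_of_mem_head? hm₁)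
        omega
      exact ⟨by omega, by omega⟩
    · intro y hy
      refine second_lb (a+1) b mt [] _ ?_ (by simp) (by simp) y hy
      intro m₂ hm₂
      have := hmt.1 m₂ (List.mem_of_mem_tail (List.mem_of_mem_head? hm₂))
      omega
  | case3 a b d₀ dt ih =>
    rw [buildC]
    have hdt := (List.pairwise_cons.mp hd)
    have hX : ∀ x ∈ (buildC a (b+1) [] dt).head?, pl (d₀ + a + 2*b) + 3 ≤ x := by
      refine head_lb a (b+1) [] dt _ (by simp) ?_
      intro e he
      have := hdt.1 e (List.mem_of_mem_head? he)
      simp only [pl]; omega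
    refine Ok.cons _ _ (by simp [pl]; omega) ?_ ?_ ?_
    · intro y hy
      simp only [List.head?_cons, Option.mem_def, Option.some.injEq] at hy
      subst hy
      refine ⟨by simp [ph], fun _ => ?_⟩
      have : pl (d₀ + a + 2*b) + ph (d₀ + a + 2*b) = 4 + 3*(d₀ + a + 2*b) := by
        simp [pl, ph]; omega
      omega
    · intro y hy
      simp only [List.tail_cons] at hy
      exact hX y hy
    · refine Ok.cons _ _ (by simp [ph, pl]; omega) ?_ ?_ (ih List.Pairwise.nil hdt.2)
      · intro y hy
        have := hX y hy
        simp only [pl, ph] at *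
        exact ⟨by omega, by omega⟩
      · intro y hy
        refine second_lb a (b+1) [] dt _ (by simp) ?_ ?_ y hy
        · intro e he
          have := hdt.1 e (List.mem_of_mem_head? he)
          simp only [pl, ph]; omega
        · intro e he
          have := hdt.1 e (List.mem_of_mem_head? he)
          simp only [pl, ph]; omega
  | case4 a b m₀ mt d₀ dt hr ih =>
    rw [buildC, if_pos hr]
    have hmt := (List.pairwise_cons.mp hμ)
    refine Ok.cons _ _ (by omega) ?_ ?_ (ih hmt.2 hd)
    · intro y hy
      have : m₀ + 1 + 2*a + 3*b + 2 ≤ y := by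
        refine head_lb (a+1) b mt (d₀ :: dt) _ ?_ ?_ y hy
        · intro m₁ hm₁
          have := hmt.1 m₁ (List.mem_of_mem_head? hm₁)
          omega
        · intro e he
          simp only [List.head?_cons, Option.mem_def, Option.some.injEq] at he
          subst he
          simp only [pl]; omega
      exact ⟨by omega, by omega⟩
    · intro y hy
      refine second_lb (a+1) b mt (d₀ :: dt) _ ?_ ?_ ?_ y hy
      · intro m₂ hm₂
        have := hmt.1 m₂ (List.mem_of_mem_tail (List.mem_of_mem_head? hm₂))
        omega
      · intro e he
        simp only [List.head?_cons, Option.mem_def, Option.some.injEq] at he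
        subst he
        simp only [pl]; omega
      · intro e he
        simp only [List.head?_cons, Option.mem_def, Option.some.injEq] at he
        subst he
        simp only [pl, ph]; omega
  | case5 a b m₀ mt d₀ dt hr ih =>
    rw [buildC, if_neg hr]
    have hmt := (List.pairwise_cons.mp hμ)
    have hdt := (List.pairwise_cons.mp hd)
    have hX : ∀ x ∈ (buildC a (b+1) (m₀ :: mt) dt).head?, pl (d₀ + a + 2*b) + 3 ≤ x := by
      refine head_lb a (b+1) (m₀ :: mt) dt _ ?_ ?_
      · intro m hm
        simp only [List.head?_cons, Option.mem_def, Option.some.injEq] at hm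
        subst hm
        simp only [pl]; omega
      · intro e he
        have := hdt.1 e (List.mem_of_mem_head? he)
        simp only [pl]; omega
    refine Ok.cons _ _ (by simp [pl]; omega) ?_ ?_ ?_
    · intro y hy
      simp only [List.head?_cons, Option.mem_def, Option.some.injEq] at hy
      subst hy
      refine ⟨by simp [ph], fun _ => ?_⟩
      have : pl (d₀ + a + 2*b) + ph (d₀ + a + 2*b) = 4 + 3*(d₀ + a + 2*b) := by
        simp [pl, ph]; omega
      omega
    · intro y hy
      simp only [List.tail_cons] at hy
      exact hX y hy
    · refine Ok.cons _ _ (by simp [ph, pl]; omega) ?_ ?_ (ih hμ hdt.2)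
      · intro y hy
        have := hX y hy
        simp only [pl, ph] at *
        exact ⟨by omega, by omega⟩
      · intro y hy
        refine second_lb a (b+1) (m₀ :: mt) dt _ ?_ ?_ ?_ y hy
        · intro m₁ hm₁
          have := hmt.1 m₁ (List.mem_of_mem_head? hm₁)
          simp only [pl, ph]; omega
        · intro e he
          have := hdt.1 e (List.mem_of_mem_head? he)
          simp only [pl, ph]; omega
        · intro e he
          have := hdt.1 e (List.mem_of_mem_head? he)
          simp only [pl, ph]; omega

lemma S_gap (a b : ℕ) (m₀ : ℕ) (mt d : List ℕ) (hmt : ∀ m ∈ mt.head?, m₀ ≤ m)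
    (hrule : ∀ d₀ ∈ d.head?, 2*m₀ + a + (d₀ + a) % 2 ≤ 3*d₀) :
    ∀ x ∈ (buildC (a+1) b mt d).head?, m₀ + 1 + 2*a + 3*b + 2 ≤ x := by
  refine head_lb (a+1) b mt d _ ?_ ?_
  · intro m₁ hm₁
    have := hmt m₁ hm₁
    omega
  · intro e he
    have := hrule e he
    simp only [pl]; omega

theorem buildC_inj (a b : ℕ) (μ d : List ℕ) :
    ∀ μ' d' : List ℕ, μ.Pairwise (· ≤ ·) → d.Pairwise (· ≤ ·) →
      μ'.Pairwise (· ≤ ·) → d'.Pairwise (· ≤ ·) →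
      buildC a b μ d = buildC a b μ' d' → μ = μ' ∧ d = d' := by
  induction a, b, μ, d using buildC.induct with
  | case1 a b =>
    intro μ' d' _ _ _ _ heq
    rw [buildC] at heq
    match μ', d', heq with
    | [], [], _ => exact ⟨rfl, rfl⟩
    | m₀ :: mt, [], heq => rw [buildC] at heq; simp at heq
    | [], d₀ :: dt, heq => rw [buildC] at heq; simp at heq
    | m₀ :: mt, d₀ :: dt, heq => rw [buildC] at heq; split_ifs at heq <;> simp at heq
  | case2 a b m₀ mt ih =>
    intro μ' d' hμ hd hμ' hd' heq
    rw [buildC] at heq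
    have hgap : ∀ x ∈ (buildC (a+1) b mt []).head?, m₀ + 1 + 2*a + 3*b + 2 ≤ x :=
      S_gap a b m₀ mt [] (fun m hm => (List.pairwise_cons.mp hμ).1 m (List.mem_of_mem_head? hm))
        (by simp)
    match μ', d', heq with
    | [], [], heq => rw [buildC] at heq; simp at heq
    | m₀' :: mt', [], heq =>
      rw [buildC] at heq
      simp only [List.cons.injEq] at heq
      obtain ⟨h1, h2⟩ := heq
      have : m₀ = m₀' := by omega
      subst this
      obtain ⟨h3, h4⟩ := ih mt' [] (List.pairwise_cons.mp hμ).2 hd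
        (List.pairwise_cons.mp hμ').2 hd' h2
      exact ⟨by rw [h3], h4⟩
    | [], d₀' :: dt', heq =>
      rw [buildC] at heq
      simp only [List.cons.injEq] at heq
      -- second element of LHS ≥ first + 2; RHS second = ph ≤ pl + 1
      exfalso
      have h2 := heq.2
      have hg := hgap (ph (d₀' + a + 2*b))
      rw [h2] at hg
      have := hg (by simp)
      simp only [pl, ph] at this heq
      omega
    | m₀' :: mt', d₀' :: dt', heq =>
      rw [buildC] at heq
      split_ifs at heq with hr'
      · simp only [List.cons.injEq] at heq
        obtain ⟨h1, h2⟩ := heq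
        have : m₀ = m₀' := by omega
        subst this
        obtain ⟨h3, h4⟩ := ih mt' (d₀' :: dt') (List.pairwise_cons.mp hμ).2 hd
          (List.pairwise_cons.mp hμ').2 hd' h2
        exact ⟨by rw [h3], h4⟩
      · exfalso
        simp only [List.cons.injEq] at heq
        have h2 := heq.2
        have hg := hgap (ph (d₀' + a + 2*b))
        rw [h2] at hg
        have := hg (by simp)
        simp only [pl, ph] at this heq
        omega
  | case3 a b d₀ dt ih =>
    intro μ' d' hμ hd hμ' hd' heq
    rw [buildC] at heq
    match μ', d', heq with
    | [], [], heq => rw [buildC] at heq; simp at heq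
    | m₀' :: mt', [], heq =>
      exfalso
      rw [buildC] at heq
      simp only [List.cons.injEq] at heq
      have hgap : ∀ x ∈ (buildC (a+1) b mt' []).head?, m₀' + 1 + 2*a + 3*b + 2 ≤ x :=
        S_gap a b m₀' mt' [] (fun m hm => (List.pairwise_cons.mp hμ').1 m (List.mem_of_mem_head? hm))
          (by simp)
      have h2 := heq.2
      have hg := hgap (ph (d₀ + a + 2*b))
      rw [← h2] at hg
      have := hg (by simp)
      simp only [pl, ph] at this heq
      omega
    | [], d₀' :: dt', heq =>
      rw [buildC] at heq
      simp only [List.cons.injEq] at heq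
      obtain ⟨h1, h2, h3⟩ := heq
      have hc : d₀ = d₀' := by simp only [pl, ph] at h1 h2; omega
      subst hc
      obtain ⟨h4, h5⟩ := ih [] dt' hμ (List.pairwise_cons.mp hd).2 hμ'
        (List.pairwise_cons.mp hd').2 h3
      exact ⟨h4, by rw [h5]⟩
    | m₀' :: mt', d₀' :: dt', heq =>
      rw [buildC] at heq
      split_ifs at heq with hr'
      · exfalso
        simp only [List.cons.injEq] at heq
        have hgap : ∀ x ∈ (buildC (a+1) b mt' (d₀' :: dt')).head?, m₀' + 1 + 2*a + 3*b + 2 ≤ x :=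
          S_gap a b m₀' mt' (d₀' :: dt')
            (fun m hm => (List.pairwise_cons.mp hμ').1 m (List.mem_of_mem_head? hm))
            (by intro e he; simp only [List.head?_cons, Option.mem_def, Option.some.injEq] at he
                subst he; exact hr')
        have h2 := heq.2
        have hg := hgap (ph (d₀ + a + 2*b))
        rw [← h2] at hg
        have := hg (by simp)
        simp only [pl, ph] at this heq
        omega
      · simp only [List.cons.injEq] at heq
        obtain ⟨h1, h2, h3⟩ := heq
        have hc : d₀ = d₀' := by simp only [pl, ph] at h1 h2; omega
        subst hc
        obtain ⟨h4, h5⟩ := ih (m₀' :: mt') dt' hμ (List.pairwise_cons.mp hd).2 hμ'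
          (List.pairwise_cons.mp hd').2 h3
        exact ⟨h4, by rw [h5]⟩
  | case4 a b m₀ mt d₀ dt hr ih =>
    intro μ' d' hμ hd hμ' hd' heq
    rw [buildC, if_pos hr] at heq
    have hgap : ∀ x ∈ (buildC (a+1) b mt (d₀ :: dt)).head?, m₀ + 1 + 2*a + 3*b + 2 ≤ x :=
      S_gap a b m₀ mt (d₀ :: dt)
        (fun m hm => (List.pairwise_cons.mp hμ).1 m (List.mem_of_mem_head? hm))
        (by intro e he; simp only [List.head?_cons, Option.mem_def, Option.some.injEq] at he
            subst he; exact hr)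
    match μ', d', heq with
    | [], [], heq => rw [buildC] at heq; simp at heq
    | m₀' :: mt', [], heq =>
      rw [buildC] at heq
      simp only [List.cons.injEq] at heq
      obtain ⟨h1, h2⟩ := heq
      have : m₀ = m₀' := by omega
      subst this
      obtain ⟨h3, h4⟩ := ih mt' [] (List.pairwise_cons.mp hμ).2 hd
        (List.pairwise_cons.mp hμ').2 hd' h2
      exact ⟨by rw [h3], h4⟩
    | [], d₀' :: dt', heq =>
      exfalso
      rw [buildC] at heq
      simp only [List.cons.injEq] at heq
      have h2 := heq.2
      have hg := hgap (ph (d₀' + a + 2*b))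
      rw [h2] at hg
      have := hg (by simp)
      simp only [pl, ph] at this heq
      omega
    | m₀' :: mt', d₀' :: dt', heq =>
      rw [buildC] at heq
      split_ifs at heq with hr'
      · simp only [List.cons.injEq] at heq
        obtain ⟨h1, h2⟩ := heq
        have : m₀ = m₀' := by omega
        subst this
        obtain ⟨h3, h4⟩ := ih mt' (d₀' :: dt') (List.pairwise_cons.mp hμ).2 hd
          (List.pairwise_cons.mp hμ').2 hd' h2
        exact ⟨by rw [h3], h4⟩
      · exfalso
        simp only [List.cons.injEq] at heq
        have h2 := heq.2
        have hg := hgap (ph (d₀' + a + 2*b))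
        rw [h2] at hg
        have := hg (by simp)
        simp only [pl, ph] at this heq
        omega
  | case5 a b m₀ mt d₀ dt hr ih =>
    intro μ' d' hμ hd hμ' hd' heq
    rw [buildC, if_neg hr] at heq
    match μ', d', heq with
    | [], [], heq => rw [buildC] at heq; simp at heq
    | m₀' :: mt', [], heq =>
      exfalso
      rw [buildC] at heq
      simp only [List.cons.injEq] at heq
      have hgap : ∀ x ∈ (buildC (a+1) b mt' []).head?, m₀' + 1 + 2*a + 3*b + 2 ≤ x :=
        S_gap a b m₀' mt' [] (fun m hm => (List.pairwise_cons.mp hμ').1 m (List.mem_of_mem_head? hm))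
          (by simp)
      have h2 := heq.2
      have hg := hgap (ph (d₀ + a + 2*b))
      rw [← h2] at hg
      have := hg (by simp)
      simp only [pl, ph] at this heq
      omega
    | [], d₀' :: dt', heq =>
      rw [buildC] at heq
      simp only [List.cons.injEq] at heq
      obtain ⟨h1, h2, h3⟩ := heq
      have hc : d₀ = d₀' := by simp only [pl, ph] at h1 h2; omega
      subst hc
      obtain ⟨h4, h5⟩ := ih [] dt' hμ (List.pairwise_cons.mp hd).2 hμ'
        (List.pairwise_cons.mp hd').2 h3
      exact ⟨h4, by rw [h5]⟩
    | m₀' :: mt', d₀' :: dt', heq =>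
      rw [buildC] at heq
      split_ifs at heq with hr'
      · exfalso
        simp only [List.cons.injEq] at heq
        have hgap : ∀ x ∈ (buildC (a+1) b mt' (d₀' :: dt')).head?, m₀' + 1 + 2*a + 3*b + 2 ≤ x :=
          S_gap a b m₀' mt' (d₀' :: dt')
            (fun m hm => (List.pairwise_cons.mp hμ').1 m (List.mem_of_mem_head? hm))
            (by intro e he; simp only [List.head?_cons, Option.mem_def, Option.some.injEq] at he
                subst he; exact hr')
        have h2 := heq.2
        have hg := hgap (ph (d₀ + a + 2*b))
        rw [← h2] at hg
        have := hg (by simp)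
        simp only [pl, ph] at this heq
        omega
      · simp only [List.cons.injEq] at heq
        obtain ⟨h1, h2, h3⟩ := heq
        have hc : d₀ = d₀' := by simp only [pl, ph] at h1 h2; omega
        subst hc
        obtain ⟨h4, h5⟩ := ih (m₀' :: mt') dt' hμ (List.pairwise_cons.mp hd).2 hμ'
          (List.pairwise_cons.mp hd').2 h3
        exact ⟨h4, by rw [h5]⟩

lemma buildC_shape (a b : ℕ) (μ d : List ℕ) :
    (μ = [] ∧ d = [] ∧ buildC a b μ d = []) ∨
    (∃ m₀ mt, μ = m₀ :: mt ∧ (∀ d₀ ∈ d.head?, 2*m₀ + a + (d₀+a) % 2 ≤ 3*d₀) ∧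
        buildC a b μ d = (m₀+1+2*a+3*b) :: buildC (a+1) b mt d) ∨
    (∃ d₀ dt, d = d₀ :: dt ∧ (∀ m₀ ∈ μ.head?, ¬(2*m₀ + a + (d₀+a) % 2 ≤ 3*d₀)) ∧
        buildC a b μ d = pl (d₀+a+2*b) :: ph (d₀+a+2*b) :: buildC a (b+1) μ dt) := by
  match μ, d with
  | [], [] => exact Or.inl ⟨rfl, rfl, by rw [buildC]⟩
  | m₀ :: mt, [] => exact Or.inr (Or.inl ⟨m₀, mt, rfl, by simp, by rw [buildC]⟩)
  | [], d₀ :: dt => exact Or.inr (Or.inr ⟨d₀, dt, rfl, by simp, by rw [buildC]⟩)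
  | m₀ :: mt, d₀ :: dt =>
    by_cases hr : 2*m₀ + a + (d₀+a) % 2 ≤ 3*d₀
    · refine Or.inr (Or.inl ⟨m₀, mt, rfl, ?_, by rw [buildC, if_pos hr]⟩)
      intro e he
      simp only [List.head?_cons, Option.mem_def, Option.some.injEq] at he
      exact he ▸ hr
    · refine Or.inr (Or.inr ⟨d₀, dt, rfl, ?_, by rw [buildC, if_neg hr]⟩)
      intro e he
      simp only [List.head?_cons, Option.mem_def, Option.some.injEq] at he
      exact he ▸ hr

def Pre (a b : ℕ) : List ℕ → Prop
  | [] => True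
  | [x] => 1 + 2*a + 3*b ≤ x
  | x :: y :: _ =>
    if y ≤ x + 1 then ∃ D, x + y = 4 + 3*(D + a + 2*b) ∧ a + (D + a) % 2 ≤ 3*D + 2
    else 1 + 2*a + 3*b ≤ x

theorem buildC_surj : ∀ (n : ℕ) (l : List ℕ), l.length ≤ n → Ok l → ∀ a b, Pre a b l →
    ∃ μ d : List ℕ, μ.Pairwise (· ≤ ·) ∧ d.Pairwise (· ≤ ·) ∧ buildC a b μ d = l := by
  intro n
  induction n with
  | zero =>
    intro l hl _ a b _
    match l, hl with
    | [], _ => exact ⟨[], [], List.Pairwise.nil, List.Pairwise.nil, by rw [buildC]⟩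
  | succ n IH =>
    intro l hl hOk a b hPre
    match l with
    | [] => exact ⟨[], [], List.Pairwise.nil, List.Pairwise.nil, by rw [buildC]⟩
    | [x] =>
      simp only [Pre] at hPre
      refine ⟨[x - (1+2*a+3*b)], [], List.pairwise_singleton _ _, List.Pairwise.nil, ?_⟩
      rw [buildC, buildC]
      congr 1
      omega
    | x :: y :: t =>
      rcases hOk with _ | ⟨_, _, hx1, hx2, hx3, hOk'⟩
      obtain ⟨hxy, hclose⟩ := hx2 y (by simp)
      rcases hOk' with _ | ⟨_, _, hy1, hy2, hy3, hOkt⟩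
      by_cases hcl : y ≤ x + 1
      · -- pair start
        simp only [Pre, if_pos hcl] at hPre
        obtain ⟨D, hD, hinv⟩ := hPre
        obtain ⟨hx, hy⟩ := pl_ph_eq (D + a + 2*b) x y hxy hcl hD
        have h2pl := two_pl (D + a + 2*b)
        have h2ph := two_ph (D + a + 2*b)
        have ht1 : ∀ z ∈ t.head?, x + 3 ≤ z := hx3
        have ht2 : ∀ w ∈ t.tail.head?, y + 3 ≤ w := hy3
        have hPret : Pre a (b+1) t := by
          match t with
          | [] => trivial
          | [z] =>
            have := ht1 z (by simp)
            simp only [Pre]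
            omega
          | z :: w :: t' =>
            have hz := ht1 z (by simp)
            have hw := ht2 w (by simp)
            simp only [Pre]
            split_ifs with hzw
            · rcases hOkt with _ | ⟨_, _, hz1, hz2, hz3, _⟩
              have hzsum := (hz2 w (by simp)).2 hzw
              exact ⟨(z + w - 4 - 3*a - 6*(b+1))/3, by omega, by omega⟩
            · omega
        obtain ⟨μ', d'', hsμ, hsd, hbt⟩ := IH t (by simp at hl ⊢; omega) hOkt a (b+1) hPret
        rcases buildC_shape a (b+1) μ' d'' with ⟨hμe, hde, hbe⟩ | ⟨m₀, mt, hμ', hrule, hbe⟩ |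
          ⟨e₀, et, hd', hrule, hbe⟩
        · -- t = []
          subst hμe hde
          rw [hbe] at hbt
          refine ⟨[], [D], List.Pairwise.nil, List.pairwise_singleton _ _, ?_⟩
          rw [buildC, ← hx, ← hy, ← hbt, buildC]
        · -- t starts with a singleton of value m₀+1+2a+3(b+1)
          have hzmem : (m₀+1+2*a+3*(b+1)) ∈ t.head? := by rw [← hbt, hbe]; simp
          have hzge := ht1 _ hzmem
          have hm₀ : 3*D + 2 ≤ 2*m₀ + a + (D+a) % 2 := by omega
          have hd''head : ∀ e ∈ d''.head?, D ≤ e := by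
            intro e he
            have := hrule e he
            omega
          refine ⟨μ', D :: d'', hsμ, ?_, ?_⟩
          · rw [List.pairwise_cons]
            refine ⟨?_, hsd⟩
            intro e he
            rcases d'' with _ | ⟨e₀, et⟩
            · simp at he
            · have hD0 := hd''head e₀ (by simp)
              rcases List.mem_cons.mp he with rfl | he'
              · exact hD0
              · exact le_trans hD0 ((List.pairwise_cons.mp hsd).1 e he')
          · subst hμ'
            rw [buildC, if_neg (by omega)]
            rw [← hx, ← hy, hbt]
        · -- t starts with a pair of parameter e₀ + a + 2(b+1)
          have hzmem : pl (e₀+a+2*(b+1)) ∈ t.head? := by rw [← hbt, hbe]; simp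
          have hzge := ht1 _ hzmem
          have h2pl' := two_pl (e₀+a+2*(b+1))
          have hDe : D ≤ e₀ := by omega
          refine ⟨μ', D :: d'', hsμ, ?_, ?_⟩
          · rw [List.pairwise_cons]
            refine ⟨?_, hsd⟩
            subst hd'
            intro e he
            rcases List.mem_cons.mp he with rfl | he'
            · exact hDe
            · exact le_trans hDe ((List.pairwise_cons.mp hsd).1 e he')
          · rcases μ' with _ | ⟨m₀, mt⟩
            · rw [buildC, ← hx, ← hy, hbt]
            · have hrf := hrule m₀ (by simp)
              rw [buildC, if_neg (by omega)]
              rw [← hx, ← hy, hbt]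
      · -- singleton start
        simp only [Pre, if_neg hcl] at hPre
        have hyx : x + 2 ≤ y := by omega
        have hPre' : Pre (a+1) b (y :: t) := by
          match t with
          | [] => simp only [Pre]; omega
          | z :: t' =>
            have hz := hx3 z (by simp)
            simp only [Pre]
            split_ifs with hzy
            · obtain ⟨hyz, hysum⟩ := hy2 z (by simp)
              exact ⟨(y + z - 4 - 3*(a+1) - 6*b)/3, by omega, by omega⟩
            · omega
        obtain ⟨μ', d', hsμ, hsd, hbt⟩ := IH (y :: t) (by simp at hl ⊢; omega) (Ok.cons y t hy1 hy2 hy3 hOkt) (a+1) b hPre'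
        have hxm : x = (x - (1+2*a+3*b)) + 1 + 2*a + 3*b := by omega
        set m₀ := x - (1+2*a+3*b) with hm₀def
        rcases buildC_shape (a+1) b μ' d' with ⟨hμe, hde, hbe⟩ | ⟨p₀, pt, hμ', hrule, hbe⟩ |
          ⟨e₀, et, hd', hrule, hbe⟩
        · rw [hbe] at hbt; simp at hbt
        · -- y :: t starts with a singleton
          have hyv : y = p₀+1+2*(a+1)+3*b := by
            have h := hbe.symm.trans hbt
            simp only [List.cons.injEq] at h
            exact h.1.symm
          have hmp : m₀ ≤ p₀ := by omega
          refine ⟨m₀ :: μ', d', ?_, hsd, ?_⟩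
          · rw [List.pairwise_cons]
            refine ⟨?_, hsμ⟩
            subst hμ'
            intro e he
            rcases List.mem_cons.mp he with rfl | he'
            · exact hmp
            · exact le_trans hmp ((List.pairwise_cons.mp hsμ).1 e he')
          · rcases d' with _ | ⟨d₀, dt⟩
            · rw [buildC, ← hxm, hbt]
            · have hr := hrule d₀ (by simp)
              rw [buildC, if_pos (by omega)]
              rw [← hxm, hbt]
        · -- y :: t starts with a pair
          have hyv : y = pl (e₀+(a+1)+2*b) := by
            have h := hbe.symm.trans hbt
            simp only [List.cons.injEq] at h
            exact h.1.symm
          have hsec : ph (e₀+(a+1)+2*b) ∈ t.head? := by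
            have h := hbe.symm.trans hbt
            simp only [List.cons.injEq] at h
            rw [← h.2]; simp
          have hxsec := hx3 _ (by simpa using hsec)
          have h2pl := two_pl (e₀+(a+1)+2*b)
          have h2ph := two_ph (e₀+(a+1)+2*b)
          have hmμ : ∀ p ∈ μ'.head?, m₀ ≤ p := by
            intro p hp
            have := hrule p hp
            omega
          refine ⟨m₀ :: μ', d', ?_, hsd, ?_⟩
          · rw [List.pairwise_cons]
            refine ⟨?_, hsμ⟩
            intro e he
            rcases μ' with _ | ⟨p₀, pt⟩
            · simp at he
            · have h0 := hmμ p₀ (by simp)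
              rcases List.mem_cons.mp he with rfl | he'
              · exact h0
              · exact le_trans h0 ((List.pairwise_cons.mp hsμ).1 e he')
          · rcases d' with _ | ⟨d₀, dt⟩
            · simp at hd'
            · have hd₀ : d₀ = e₀ := by simp only [List.cons.injEq] at hd'; omega
              subst hd₀
              rw [buildC, if_pos (by omega)]
              rw [← hxm, hbt]


open scoped Classical

/-- Finset of lists of naturals of length `k` with all entries `≤ B`. -/
noncomputable def listsF (k B : ℕ) : Finset (List ℕ) :=
  Finset.image (fun f : Fin k → Fin (B+1) => List.ofFn (fun i => (f i : ℕ))) Finset.univ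

lemma mem_listsF {k B : ℕ} {l : List ℕ} :
    l ∈ listsF k B ↔ l.length = k ∧ ∀ x ∈ l, x ≤ B := by
  constructor
  · intro hl
    obtain ⟨f, _, rfl⟩ := Finset.mem_image.mp hl
    refine ⟨by simp, ?_⟩
    intro x hx
    obtain ⟨i, hi⟩ := List.mem_ofFn.mp hx
    rw [← hi]
    exact Nat.lt_succ_iff.mp (f i).isLt
  · rintro ⟨hlen, hbd⟩
    subst hlen
    refine Finset.mem_image.mpr ⟨fun i => ⟨l[(i : ℕ)]'i.isLt,
      Nat.lt_succ_iff.mpr (hbd _ (List.getElem_mem i.isLt))⟩, Finset.mem_univ _, ?_⟩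
    apply List.ext_getElem (by simp)
    intro i h1 h2
    simp

/-- sorted lists of length `k` of naturals with sum `s`. -/
noncomputable def ascF (k s : ℕ) : Finset (List ℕ) :=
  (listsF k s).filter (fun l => l.Pairwise (· ≤ ·) ∧ l.sum = s)

lemma mem_ascF {k s : ℕ} {l : List ℕ} :
    l ∈ ascF k s ↔ l.length = k ∧ l.Pairwise (· ≤ ·) ∧ l.sum = s := by
  rw [ascF, Finset.mem_filter, mem_listsF]
  constructor
  · tauto
  · rintro ⟨h1, h2, h3⟩
    exact ⟨⟨h1, fun x hx => h3 ▸ List.le_sum_of_mem hx⟩, h2, h3⟩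

/-- the valid partitions Finset. -/
noncomputable def VFin (n m : ℕ) : Finset (List ℕ) :=
  (listsF m n).filter (fun l => IsPartitionOf n l ∧ DiffCond 3 2 l ∧ SumCond2 1 l)

lemma mem_VFin {n m : ℕ} {l : List ℕ} :
    l ∈ VFin n m ↔ IsPartitionOf n l ∧ l.length = m ∧ DiffCond 3 2 l ∧ SumCond2 1 l := by
  rw [VFin, Finset.mem_filter, mem_listsF]
  constructor
  · tauto
  · rintro ⟨h1, h2, h3, h4⟩
    exact ⟨⟨h2, fun x hx => h1.2.2 ▸ List.le_sum_of_mem hx⟩, h1, h3, h4⟩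

lemma krb1_eq_card (n m : ℕ) : krb1 n m = (VFin n m).card := by
  have hset : {l : List ℕ | IsPartitionOf n l ∧ l.length = m ∧ DiffCond 3 2 l ∧ SumCond2 1 l}
      = ↑(VFin n m) := by
    ext l
    simp only [Set.mem_setOf_eq, Finset.mem_coe, mem_VFin]
  rw [krb1, hset, Set.ncard_coe_finset]

/-- exponent -/
def Ebase (a b : ℕ) : ℕ := 3*b^2 + b + a^2 + 3*a*b

noncomputable def pairF (a b n : ℕ) : Finset (List ℕ × List ℕ) :=
  ((listsF a n) ×ˢ (listsF b n)).filter
    (fun q => q.1.Pairwise (· ≤ ·) ∧ q.2.Pairwise (· ≤ ·) ∧ Ebase a b + q.1.sum + 3*q.2.sum = n)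

lemma mem_pairF {a b n : ℕ} {q : List ℕ × List ℕ} :
    q ∈ pairF a b n ↔ q.1.length = a ∧ q.2.length = b ∧ q.1.Pairwise (· ≤ ·) ∧
      q.2.Pairwise (· ≤ ·) ∧ Ebase a b + q.1.sum + 3*q.2.sum = n := by
  rw [pairF, Finset.mem_filter, Finset.mem_product, mem_listsF, mem_listsF]
  constructor
  · tauto
  · rintro ⟨h1, h2, h3, h4, h5⟩
    refine ⟨⟨⟨h1, fun x hx => le_trans (List.le_sum_of_mem hx) (by omega)⟩,
      ⟨h2, fun x hx => le_trans (List.le_sum_of_mem hx) (by omega)⟩⟩, h3, h4, h5⟩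

lemma ok_of_VFin {n m : ℕ} {l : List ℕ} (h : l ∈ VFin n m) : Ok l := by
  rw [mem_VFin] at h
  exact (ok_iff l).mpr ⟨h.1.1, h.1.2.1, h.2.2.1, h.2.2.2⟩

lemma pre_zero {l : List ℕ} (h : Ok l) : Pre 0 0 l := by
  match l with
  | [] => trivial
  | [x] =>
    rcases h with _ | ⟨_, _, h1, _, _, _⟩
    simpa [Pre] using h1
  | x :: y :: t =>
    rcases h with _ | ⟨_, _, h1, h2, h3, h4⟩
    obtain ⟨hxy, hsum⟩ := h2 y (by simp)
    rcases h4 with _ | ⟨_, _, hy1, _, _, _⟩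
    simp only [Pre]
    split_ifs with hcl
    · have := hsum hcl
      exact ⟨(x + y - 4)/3, by omega, by omega⟩
    · simpa using h1

theorem card_VFin (n m : ℕ) :
    (VFin n m).card =
      ∑ p ∈ (Finset.range (m + 1) ×ˢ Finset.range (m + 1)).filter
          (fun p => p.1 + 2 * p.2 = m), (pairF p.1 p.2 n).card := by
  rw [← Finset.card_sigma]
  symm
  apply Finset.card_bij (fun (x : Σ _ : ℕ × ℕ, List ℕ × List ℕ) _ => buildC 0 0 x.2.1 x.2.2)
  · -- maps into VFin
    rintro ⟨⟨n₁, n₂⟩, μ, d⟩ hx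
    rw [Finset.mem_sigma] at hx
    obtain ⟨hp, hq⟩ := hx
    rw [mem_pairF] at hq
    obtain ⟨hlen1, hlen2, hs1, hs2, hsum⟩ := hq
    simp only [Finset.mem_filter, Finset.mem_product, Finset.mem_range] at hp
    have hok := ok_buildC 0 0 μ d hs1 hs2
    rw [ok_iff] at hok
    rw [mem_VFin]
    have hsum' : (buildC 0 0 μ d).sum = n := by
      rw [sum_buildC]
      simp only [hlen1, hlen2]
      simp only [Ebase] at hsum
      zify at hsum ⊢
      linear_combination hsum
    have hp2 : n₁ + 2 * n₂ = m := hp.2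
    have hlen' : (buildC 0 0 μ d).length = m := by
      rw [length_buildC, hlen1, hlen2]
      exact hp2
    exact ⟨⟨hok.1, hok.2.1, hsum'⟩, hlen', hok.2.2.1, hok.2.2.2⟩
  · -- injective
    rintro ⟨⟨n₁, n₂⟩, μ, d⟩ hx ⟨⟨n₁', n₂'⟩, μ', d'⟩ hx' heq
    rw [Finset.mem_sigma] at hx hx'
    obtain ⟨hp, hq⟩ := hx
    obtain ⟨hp', hq'⟩ := hx'
    rw [mem_pairF] at hq hq'
    obtain ⟨hμd, hdd⟩ := buildC_inj 0 0 μ d μ' d' hq.2.2.1 hq.2.2.2.1 hq'.2.2.1 hq'.2.2.2.1 heq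
    subst hμd hdd
    have e1 : μ.length = n₁ := hq.1
    have e1' : μ.length = n₁' := hq'.1
    have e2 : d.length = n₂ := hq.2.1
    have e2' : d.length = n₂' := hq'.2.1
    have h1 : n₁ = n₁' := by omega
    have h2 : n₂ = n₂' := by omega
    subst h1 h2
    rfl
  · -- surjective
    intro l hl
    have hok := ok_of_VFin hl
    obtain ⟨μ, d, hs1, hs2, hb⟩ := buildC_surj l.length l le_rfl hok 0 0 (pre_zero hok)
    rw [mem_VFin] at hl
    obtain ⟨⟨hsort, hpos, hsum⟩, hlen, _, _⟩ := hl
    have hlen' : μ.length + 2 * d.length = m := by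
      rw [← hlen, ← hb, length_buildC]
    have hsum' : Ebase μ.length d.length + μ.sum + 3 * d.sum = n := by
      have := sum_buildC 0 0 μ d
      rw [hb, hsum] at this
      simp only [Ebase]
      zify at this ⊢
      linear_combination -this
    refine ⟨⟨(μ.length, d.length), (μ, d)⟩, ?_, hb⟩
    rw [Finset.mem_sigma]
    constructor
    · simp only [Finset.mem_filter, Finset.mem_product, Finset.mem_range]
      omega
    · rw [mem_pairF]
      exact ⟨rfl, rfl, hs1, hs2, hsum'⟩


/-- number of sorted lists of length k with sum s -/
noncomputable def NP (k s : ℕ) : ℕ := (ascF k s).card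

lemma NP_zero (s : ℕ) : NP 0 s = if s = 0 then 1 else 0 := by
  unfold NP
  split_ifs with h
  · subst h
    rw [show ascF 0 0 = {([] : List ℕ)} from ?_]
    · simp
    · ext l
      simp only [mem_ascF, Finset.mem_singleton]
      constructor
      · rintro ⟨h1, _, _⟩; exact List.eq_nil_of_length_eq_zero h1
      · rintro rfl; exact ⟨rfl, List.Pairwise.nil, rfl⟩
  · rw [Finset.card_eq_zero]
    ext l
    simp only [mem_ascF, Finset.notMem_empty, iff_false]
    rintro ⟨h1, _, h3⟩
    rw [List.eq_nil_of_length_eq_zero h1] at h3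
    simp at h3
    omega

lemma sum_map_sub_one (l : List ℕ) (h : ∀ x ∈ l, 1 ≤ x) :
    (l.map (· - 1)).sum + l.length = l.sum := by
  induction l with
  | nil => simp
  | cons x t ih =>
    simp only [List.map_cons, List.sum_cons, List.length_cons]
    have hx := h x (by simp)
    have := ih (fun y hy => h y (by simp [hy]))
    omega

lemma head_zero (u : List ℕ) (h2 : u.Pairwise (· ≤ ·)) (h0 : 0 ∈ u) : u = 0 :: u.tail := by
  match u, h2, h0 with
  | x :: t, h2, h0 =>
    have hx : x = 0 := by
      rcases List.mem_cons.mp h0 with h | h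
      · omega
      · have := (List.pairwise_cons.mp h2).1 0 h; omega
    rw [hx, List.tail_cons]

lemma map_sub_add (u : List ℕ) (hu : 0 ∉ u) : (u.map (· - 1)).map (· + 1) = u := by
  rw [List.map_map]
  conv_rhs => rw [← List.map_id u]
  apply List.map_congr_left
  intro x hx
  have : x ≠ 0 := fun h => hu (h ▸ hx)
  simp only [Function.comp_apply, id_eq]
  omega

lemma sum_map_add_one (t : List ℕ) : (t.map (· + 1)).sum = t.sum + t.length := by
  induction t with
  | nil => simp
  | cons x u ih => simp only [List.map_cons, List.sum_cons, List.length_cons, ih]; omega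

lemma length_le_sum (l : List ℕ) (hpos : ∀ x ∈ l, 1 ≤ x) : l.length ≤ l.sum := by
  induction l with
  | nil => simp
  | cons x t ih =>
    simp only [List.length_cons, List.sum_cons]
    have := ih (fun y hy => hpos y (by simp [hy]))
    have := hpos x (by simp)
    omega

lemma NP_succ (k s : ℕ) :
    NP (k+1) s = NP k s + (if k+1 ≤ s then NP (k+1) (s - (k+1)) else 0) := by
  classical
  unfold NP
  rw [← Finset.card_filter_add_card_filter_not (s := ascF (k+1) s)
    (p := fun l => 0 ∈ l)]
  congr 1
  · -- lists containing a zero  <-> ascF k s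
    apply Finset.card_bij (fun l _ => l.tail)
    · intro l hl
      rw [Finset.mem_filter, mem_ascF] at hl
      obtain ⟨⟨h1, h2, h3⟩, h0⟩ := hl
      have hl0 := head_zero l h2 h0
      rw [mem_ascF]
      refine ⟨?_, ?_, ?_⟩
      · have := congrArg List.length hl0
        simp only [List.length_cons] at this
        omega
      · exact (List.pairwise_cons.mp (hl0 ▸ h2)).2
      · have := congrArg List.sum hl0
        simp only [List.sum_cons] at this
        omega
    · intro l hl l' hl' he
      rw [Finset.mem_filter, mem_ascF] at hl hl'
      rw [head_zero l hl.1.2.1 hl.2, head_zero l' hl'.1.2.1 hl'.2, he]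
    · intro t ht
      rw [mem_ascF] at ht
      refine ⟨0 :: t, ?_, by simp⟩
      rw [Finset.mem_filter, mem_ascF]
      refine ⟨⟨by simp [ht.1], ?_, by simp [ht.2.2]⟩, by simp⟩
      rw [List.pairwise_cons]
      exact ⟨fun b _ => Nat.zero_le b, ht.2.1⟩
  · -- lists with no zero
    split_ifs with hks
    · apply Finset.card_bij (fun l _ => l.map (· - 1))
      · intro l hl
        rw [Finset.mem_filter, mem_ascF] at hl
        obtain ⟨⟨h1, h2, h3⟩, h0⟩ := hl
        have hpos : ∀ x ∈ l, 1 ≤ x := by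
          intro x hx
          rcases Nat.eq_zero_or_pos x with rfl | h
          · exact absurd hx h0
          · exact h
        rw [mem_ascF]
        refine ⟨by simp [h1], ?_, ?_⟩
        · rw [List.pairwise_map]
          exact h2.imp (fun h => by omega)
        · have := sum_map_sub_one l hpos
          omega
      · intro l hl l' hl' he
        rw [Finset.mem_filter, mem_ascF] at hl hl'
        rw [← map_sub_add l hl.2, ← map_sub_add l' hl'.2, he]
      · intro t ht
        rw [mem_ascF] at ht
        refine ⟨t.map (· + 1), ?_, ?_⟩
        · rw [Finset.mem_filter, mem_ascF]
          refine ⟨⟨by simp [ht.1], ?_, ?_⟩, ?_⟩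
          · rw [List.pairwise_map]
            exact ht.2.1.imp (fun h => by omega)
          · rw [sum_map_add_one, ht.2.2, ht.1]
            omega
          · intro hmem
            simp only [List.mem_map] at hmem
            obtain ⟨x, _, hx⟩ := hmem
            omega
        · rw [List.map_map]
          rw [show ((· - 1) ∘ (· + 1) : ℕ → ℕ) = fun x => x from by funext x; simp]
          exact List.map_id t
    · -- s < k+1 : no list without zeros
      rw [Finset.card_eq_zero]
      ext l
      simp only [Finset.mem_filter, mem_ascF, Finset.notMem_empty, iff_false, not_and]
      rintro ⟨h1, h2, h3⟩ h0
      have hpos : ∀ x ∈ l, 1 ≤ x := by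
        intro x hx
        rcases Nat.eq_zero_or_pos x with rfl | h
        · exact absurd hx h0
        · exact h
      have := length_le_sum l hpos
      omega

noncomputable def Pser (k : ℕ) : PowerSeries ℚ := PowerSeries.mk fun s => (NP k s : ℚ)
noncomputable def Qser (k : ℕ) : PowerSeries ℚ :=
  PowerSeries.mk fun s => if 3 ∣ s then (NP k (s/3) : ℚ) else 0

lemma qq_mul_P (a : ℕ) : qq a * Pser a = 1 := by
  induction a with
  | zero =>
    rw [qq]
    simp only [Finset.range_zero, Finset.prod_empty, one_mul]
    ext s
    rw [Pser, PowerSeries.coeff_mk, PowerSeries.coeff_one, NP_zero]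
    split_ifs <;> simp
  | succ k ih =>
    have hstep : (1 - (PowerSeries.X : PowerSeries ℚ)^(k+1)) * Pser (k+1) = Pser k := by
      ext s
      rw [sub_mul, one_mul, map_sub, PowerSeries.coeff_X_pow_mul']
      simp only [Pser, PowerSeries.coeff_mk]
      rw [NP_succ k s]
      split_ifs with h
      · push_cast
        ring
      · push_cast
        ring
    rw [qq, Finset.prod_range_succ, ← qq]
    calc qq k * (1 - (PowerSeries.X : PowerSeries ℚ)^(k+1)) * Pser (k+1)
        = qq k * ((1 - (PowerSeries.X : PowerSeries ℚ)^(k+1)) * Pser (k+1)) := by ring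
      _ = qq k * Pser k := by rw [hstep]
      _ = 1 := ih

lemma qcube_mul_Q (b : ℕ) : qcube b * Qser b = 1 := by
  induction b with
  | zero =>
    rw [qcube]
    simp only [Finset.range_zero, Finset.prod_empty, one_mul]
    ext s
    rw [Qser, PowerSeries.coeff_mk, PowerSeries.coeff_one]
    by_cases h3 : 3 ∣ s
    · rw [if_pos h3, NP_zero]
      by_cases h0 : s = 0
      · subst h0
        norm_num
      · rw [if_neg (by omega), if_neg h0]
        norm_num
    · rw [if_neg h3, if_neg (by rintro rfl; exact h3 ⟨0, rfl⟩)]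
  | succ k ih =>
    have hstep : (1 - (PowerSeries.X : PowerSeries ℚ)^(3*(k+1))) * Qser (k+1) = Qser k := by
      ext s
      rw [sub_mul, one_mul, map_sub, PowerSeries.coeff_X_pow_mul']
      simp only [Qser, PowerSeries.coeff_mk]
      by_cases h3 : 3 ∣ s
      · rw [if_pos h3]
        have hrec := NP_succ k (s/3)
        split_ifs with h1 h2 h2
        · -- 3(k+1) ≤ s and 3 ∣ s - 3(k+1)
          have he : (s - 3*(k+1))/3 = s/3 - (k+1) := by omega
          rw [he, hrec, if_pos (by omega)]
          push_cast
          ring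
        · exfalso; exact h2 (by omega)
        · rw [hrec, if_neg (by omega)]
          push_cast
          ring
      · rw [if_neg h3]
        split_ifs with h1 h2
        · exact absurd (by omega : 3 ∣ s) h3
        · simp
        · simp
    rw [qcube, Finset.prod_range_succ, ← qcube]
    calc qcube k * (1 - (PowerSeries.X : PowerSeries ℚ)^(3*(k+1))) * Qser (k+1)
        = qcube k * ((1 - (PowerSeries.X : PowerSeries ℚ)^(3*(k+1))) * Qser (k+1)) := by ring
      _ = qcube k * Qser k := by rw [hstep]
      _ = 1 := ih

lemma inv_qq_qcube (a b : ℕ) : (qq a * qcube b)⁻¹ = Pser a * Qser b := by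
  have hc : PowerSeries.constantCoeff (R := ℚ) (qq a * qcube b) ≠ 0 := by
    have h1 : (PowerSeries.constantCoeff (R := ℚ)) (qq a) = 1 := by
      rw [qq, map_prod]
      apply Finset.prod_eq_one
      intro i _
      rw [map_sub, map_one, map_pow, PowerSeries.constantCoeff_X]
      simp
    have h2 : (PowerSeries.constantCoeff (R := ℚ)) (qcube b) = 1 := by
      rw [qcube, map_prod]
      apply Finset.prod_eq_one
      intro i _
      rw [map_sub, map_one, map_pow, PowerSeries.constantCoeff_X]
      simp
    rw [map_mul, h1, h2]
    norm_num
  rw [PowerSeries.inv_eq_iff_mul_eq_one hc]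
  calc Pser a * Qser b * (qq a * qcube b) = (qq a * Pser a) * (qcube b * Qser b) := by ring
    _ = 1 := by rw [qq_mul_P, qcube_mul_Q, one_mul]

lemma card_pairF (a b n : ℕ) :
    ((pairF a b n).card : ℚ) =
      PowerSeries.coeff (R := ℚ) n ((PowerSeries.X : PowerSeries ℚ)^(Ebase a b) * (Pser a * Qser b)) := by
  classical
  rw [PowerSeries.coeff_X_pow_mul']
  by_cases hE : Ebase a b ≤ n
  · rw [if_pos hE, PowerSeries.coeff_mul]
    have hcard : (pairF a b n).card =
        ∑ p ∈ Finset.HasAntidiagonal.antidiagonal (n - Ebase a b),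
          ((ascF a p.1).card * (if 3 ∣ p.2 then (ascF b (p.2/3)).card else 0)) := by
      rw [Finset.card_eq_sum_card_fiberwise
        (f := fun q : List ℕ × List ℕ => (q.1.sum, 3 * q.2.sum))
        (t := Finset.HasAntidiagonal.antidiagonal (n - Ebase a b))]
      · apply Finset.sum_congr rfl
        intro p hp
        rw [Finset.HasAntidiagonal.mem_antidiagonal] at hp
        have hset : (pairF a b n).filter (fun q => (q.1.sum, 3 * q.2.sum) = p)
            = (ascF a p.1) ×ˢ (if 3 ∣ p.2 then ascF b (p.2/3) else ∅) := by
          ext q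
          rw [Finset.mem_filter, mem_pairF, Finset.mem_product, Prod.mk.injEq, mem_ascF]
          constructor
          · rintro ⟨⟨h1, h2, h3, h4, h5⟩, h6, h7⟩
            have h3d : 3 ∣ p.2 := ⟨q.2.sum, h7.symm⟩
            rw [if_pos h3d, mem_ascF]
            exact ⟨⟨h1, h3, h6⟩, h2, h4, by omega⟩
          · rintro ⟨⟨h1, h3, h6⟩, hq2⟩
            split_ifs at hq2 with h3d
            · rw [mem_ascF] at hq2
              refine ⟨⟨h1, hq2.1, h3, hq2.2.1, by omega⟩, h6, by omega⟩
            · exact absurd hq2 (Finset.notMem_empty _)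
        rw [hset]
        split_ifs with h3d
        · rw [Finset.card_product]
        · rw [Finset.card_product]
          simp
      · intro q hq
        rw [Finset.mem_coe, mem_pairF] at hq
        rw [Finset.mem_coe, Finset.HasAntidiagonal.mem_antidiagonal]
        dsimp only
        omega
    rw [hcard]
    push_cast
    apply Finset.sum_congr rfl
    intro p _
    simp only [Pser, Qser, PowerSeries.coeff_mk, NP]
  · rw [if_neg hE]
    have : pairF a b n = ∅ := by
      ext q
      simp only [mem_pairF, Finset.notMem_empty, iff_false, not_and]
      intro _ _ _ _
      omega
    rw [this]
    simp


/-- Generating function for `kr₁ᵇ`, coefficient of `q^n x^m`. -/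
theorem krb1_generating_function (n m : ℕ) :
    (krb1 n m : ℚ) =
      ∑ p ∈ (Finset.range (m + 1) ×ˢ Finset.range (m + 1)).filter
          (fun p => p.1 + 2 * p.2 = m),
        PowerSeries.coeff (R := ℚ) n
          ((X : PowerSeries ℚ) ^ (3 * p.2 ^ 2 + p.2 + p.1 ^ 2 + 3 * p.1 * p.2) * (qq p.1 * qcube p.2)⁻¹) := by
  rw [krb1_eq_card, card_VFin]
  push_cast
  apply Finset.sum_congr rfl
  intro p _
  rw [inv_qq_qcube]
  exact card_pairF p.1 p.2 n
end
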